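/- arXiv:2602.10647 — 9 statements merged into one kernel-verified Lean document; each statement's English description precedes it below -/
import Mathlib

section
/- Let σ : G → H be a continuous homomorphism of locally compact Hausdorff topological groups. Then σ is a proper map if and only if the following three conditions hold: the kernel of σ is compact; the image σ(G) is closed in H; and the corestriction of σ, viewed as a map from G onto σ(G) equipped with the subspace topology inherited from H, is an open map. -/
open Pointwise

/-- **Properness criterion for continuous homomorphisms of locally compact groups.**
A continuous homomorphism `σ : G → H` of locally compact Hausdorff topological groups is a
proper map (preimages of compact sets are compact) if and only if its kernel is compact, its
range is closed in `H`, and the corestriction of `σ` onto its range (with the subspace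
topology) is an open map. -/
theorem properness_criterion
    {G H : Type*}
    [Group G] [TopologicalSpace G] [IsTopologicalGroup G] [LocallyCompactSpace G] [T2Space G]
    [Group H] [TopologicalSpace H] [IsTopologicalGroup H] [LocallyCompactSpace H] [T2Space H]
    (σ : G →* H) (hσ : Continuous σ) :
    (∀ K : Set H, IsCompact K → IsCompact (σ ⁻¹' K)) ↔
      IsCompact (σ.ker : Set G) ∧ IsClosed (Set.range σ) ∧
        IsOpenMap (fun x : G => (⟨σ x, Set.mem_range_self x⟩ : Set.range σ)) := by
  set σ' : G → Set.range σ := fun x => (⟨σ x, Set.mem_range_self x⟩ : Set.range σ) with hσ'def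
  have hcont' : Continuous σ' := hσ.subtype_mk _
  have hsurj' : Function.Surjective σ' := by
    rintro ⟨y, g, rfl⟩; exact ⟨g, rfl⟩
  constructor
  · intro h
    have hproper : IsProperMap σ :=
      isProperMap_iff_isCompact_preimage.2 ⟨hσ, fun K hK => h K hK⟩
    have hclosedmap : IsClosedMap σ := hproper.isClosedMap
    refine ⟨?_, ?_, ?_⟩
    · have : IsCompact (σ ⁻¹' {1}) := h {1} isCompact_singleton
      convert this using 1
      ext x; simp [MonoidHom.mem_ker]
    · have := hclosedmap Set.univ isClosed_univ
      simpa [Set.image_univ] using this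
    · -- corestriction is a closed map, hence a quotient map, hence open
      have hclosed' : IsClosedMap σ' := by
        intro C hC
        have h1 : IsClosed (σ '' C) := hclosedmap C hC
        have h2 : σ' '' C = Subtype.val ⁻¹' (σ '' C) := by
          ext x
          constructor
          · rintro ⟨c, hc, rfl⟩; exact ⟨c, hc, rfl⟩
          · rintro ⟨c, hc, hcx⟩
            exact ⟨c, hc, Subtype.ext hcx⟩
        rw [h2]
        exact h1.preimage continuous_subtype_val
      have hq : Topology.IsQuotientMap σ' := hclosed'.isQuotientMap hcont' hsurj'
      intro U hU
      rw [← hq.isOpen_preimage]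
      have key : σ' ⁻¹' (σ' '' U) = U * (σ.ker : Set G) := by
        ext g
        simp only [Set.mem_preimage, Set.mem_image, Set.mem_mul]
        constructor
        · rintro ⟨u, hu, he⟩
          have heq : σ u = σ g := congrArg Subtype.val he
          refine ⟨u, hu, u⁻¹ * g, ?_, by group⟩
          simp [SetLike.mem_coe, MonoidHom.mem_ker, map_mul, ← heq]
        · rintro ⟨u, hu, k, hk, rfl⟩
          have hk' : σ k = 1 := MonoidHom.mem_ker.1 hk
          exact ⟨u, hu, Subtype.ext (by simp [hσ'def, map_mul, hk'])⟩
      rw [key]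
      exact hU.mul_right
  · rintro ⟨hker, hclosed, hopen⟩ K hK
    have hKcl : IsClosed (σ ⁻¹' K) := hK.isClosed.preimage hσ
    -- the preimage of K inside the range, as a subset of the subtype
    have hK'' : IsCompact ((Subtype.val : Set.range σ → H) ⁻¹' K) := by
      rw [Topology.IsEmbedding.subtypeVal.isCompact_iff]
      have : (Subtype.val : Set.range σ → H) '' (Subtype.val ⁻¹' K) = K ∩ Set.range σ := by
        rw [Subtype.image_preimage_coe]
        exact Set.inter_comm _ _
      rw [this]
      exact hK.inter_right hclosed
    -- choose compact neighborhoods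
    choose V hVc hVn using fun g : G => exists_compact_mem_nhds g
    have hcover : (Subtype.val ⁻¹' K : Set (Set.range σ)) ⊆
        ⋃ g : G, σ' '' interior (V g) := by
      intro x _
      obtain ⟨g, rfl⟩ := hsurj' x
      exact Set.mem_iUnion.2 ⟨g, ⟨g, mem_interior_iff_mem_nhds.2 (hVn g), rfl⟩⟩
    obtain ⟨t, ht⟩ := hK''.elim_finite_subcover _
      (fun g => hopen _ isOpen_interior) hcover
    have hC : IsCompact (⋃ g ∈ t, V g) := t.isCompact_biUnion (fun g _ => hVc g)
    refine IsCompact.of_isClosed_subset (hC.mul hker) hKcl ?_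
    intro g hg
    have hgx : σ' g ∈ (Subtype.val ⁻¹' K : Set (Set.range σ)) := hg
    obtain ⟨_, ⟨i, rfl⟩, hmem⟩ := ht hgx
    simp only [Set.mem_iUnion, Set.mem_image] at hmem
    obtain ⟨hi, c, hc, hce⟩ := hmem
    have heq : σ c = σ g := congrArg Subtype.val hce
    refine Set.mem_mul.2 ⟨c, Set.mem_biUnion hi (interior_subset hc), c⁻¹ * g, ?_, by group⟩
    simp [SetLike.mem_coe, MonoidHom.mem_ker, map_mul, ← heq]
end

section
/- Let σ : G → H be a continuous homomorphism of locally compact Hausdorff topological groups, and let N be a closed normal subgroup of G such that σ(N) is a normal subgroup of H. Let K be the topological closure of σ(N) in H, let ρ : N → K be the restriction of σ, and let σ̇ : G/N → H/K be the induced continuous homomorphism (σ̇(xN) = σ(x)K). Then σ is proper if and only if both ρ and σ̇ are proper; moreover, if σ is proper, then σ(G) is closed in H. -/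
open Set Pointwise


private lemma lift_compact' {X Y : Type*} [TopologicalSpace X] [TopologicalSpace Y]
    [LocallyCompactSpace X] {f : X → Y} (ho : IsOpenMap f)
    (hs : Function.Surjective f) {C : Set Y} (hC : IsCompact C) :
    ∃ D : Set X, IsCompact D ∧ C ⊆ f '' D := by
  choose g hg using hs
  choose K hK hKm using fun x : X => exists_compact_mem_nhds x
  have hU : ∀ y ∈ C, f '' K (g y) ∈ nhds y := by
    intro y _
    have h1 : f '' interior (K (g y)) ∈ nhds y := by
      refine (ho _ isOpen_interior).mem_nhds ?_
      exact ⟨g y, mem_interior_iff_mem_nhds.2 (hKm _), hg y⟩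
    exact Filter.mem_of_superset h1 (image_mono interior_subset)
  obtain ⟨t, _, ht⟩ := hC.elim_nhds_subcover (fun y => f '' K (g y)) hU
  refine ⟨⋃ y ∈ t, K (g y), t.isCompact_biUnion (fun _ _ => hK _), ?_⟩
  simpa [image_iUnion] using ht



/-- **Properness and passage to subgroups and quotients.**
Let `σ : G → H` be a continuous homomorphism of locally compact Hausdorff groups, `N` a closed
normal subgroup of `G` with `σ(N)` normal in `H`, `K` the topological closure of `σ(N)`,
`ρ : N → K` the restriction of `σ` and `σ̇ : G ⧸ N → H ⧸ K` the induced homomorphism. Then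
`σ` is proper if and only if both `ρ` and `σ̇` are proper; moreover if `σ` is proper then its
range is closed in `H`. -/
theorem proper_iff_restriction_and_quotient_proper
    {G H : Type*}
    [Group G] [TopologicalSpace G] [IsTopologicalGroup G] [LocallyCompactSpace G] [T2Space G]
    [Group H] [TopologicalSpace H] [IsTopologicalGroup H] [LocallyCompactSpace H] [T2Space H]
    (σ : G →* H) (hσ : Continuous σ)
    (N : Subgroup G) [N.Normal] (hNclosed : IsClosed (N : Set G))
    [(N.map σ).Normal] [((N.map σ).topologicalClosure).Normal] :
    ((∀ K : Set H, IsCompact K → IsCompact (σ ⁻¹' K)) ↔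
      ((∀ K : Set ((N.map σ).topologicalClosure), IsCompact K →
          IsCompact ((fun x : N =>
            (⟨σ x, Subgroup.le_topologicalClosure (N.map σ)
              (Subgroup.mem_map_of_mem σ x.2)⟩ : (N.map σ).topologicalClosure)) ⁻¹' K)) ∧
        (∀ K : Set (H ⧸ (N.map σ).topologicalClosure), IsCompact K →
          IsCompact ((QuotientGroup.map N ((N.map σ).topologicalClosure) σ
            (fun x hx => Subgroup.mem_comap.mpr
              (Subgroup.le_topologicalClosure (N.map σ)
                (Subgroup.mem_map_of_mem σ hx)))) ⁻¹' K)))) ∧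
    ((∀ K : Set H, IsCompact K → IsCompact (σ ⁻¹' K)) → IsClosed (Set.range σ)) := by
  set Kb := (N.map σ).topologicalClosure with hKb
  haveI hKbc : IsClosed (Kb : Set H) := Subgroup.isClosed_topologicalClosure _
  set ρ : N → Kb := fun x : N =>
    (⟨σ x, Subgroup.le_topologicalClosure (N.map σ)
      (Subgroup.mem_map_of_mem σ x.2)⟩ : Kb) with hρdef
  set σd : G ⧸ N →* H ⧸ Kb := QuotientGroup.map N Kb σ
    (fun x hx => Subgroup.mem_comap.mpr
      (Subgroup.le_topologicalClosure (N.map σ) (Subgroup.mem_map_of_mem σ hx))) with hσd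
  -- continuity of σd
  have hσdc : Continuous σd := by
    rw [(QuotientGroup.isQuotientMap_mk N).continuous_iff]
    have : σd ∘ (QuotientGroup.mk : G → G ⧸ N)
        = (QuotientGroup.mk : H → H ⧸ Kb) ∘ σ := by
      funext x; rfl
    rw [this]
    exact continuous_quot_mk.comp hσ
  constructor
  · constructor
    · intro hp
      constructor
      · -- ρ proper
        intro K hK
        have hKH : IsCompact (((↑) : Kb → H) '' K) := hK.image continuous_subtype_val
        have hpre : IsCompact (σ ⁻¹' (((↑) : Kb → H) '' K)) := hp _ hKH
        have heq : ((↑) : N → G) '' (ρ ⁻¹' K)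
            = (σ ⁻¹' (((↑) : Kb → H) '' K)) ∩ (N : Set G) := by
          ext x
          constructor
          · rintro ⟨⟨y, hy⟩, hmem, rfl⟩
            exact ⟨⟨ρ ⟨y, hy⟩, hmem, rfl⟩, hy⟩
          · rintro ⟨⟨z, hz, hze⟩, hxN⟩
            refine ⟨⟨x, hxN⟩, ?_, rfl⟩
            have hzz : ρ ⟨x, hxN⟩ = z := Subtype.ext hze.symm
            show ρ ⟨x, hxN⟩ ∈ K
            rw [hzz]; exact hz
        have : IsCompact (((↑) : N → G) '' (ρ ⁻¹' K)) := by
          rw [heq]; exact hpre.inter_right hNclosed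
        exact Subtype.isCompact_iff.mpr this
      · -- σd proper
        intro C hC
        obtain ⟨D, hD, hDC⟩ := lift_compact' (QuotientGroup.isOpenMap_coe (N := Kb))
          QuotientGroup.mk_surjective hC
        obtain ⟨U, hU, hU1⟩ := exists_compact_mem_nhds (1 : H)
        have hDU : IsCompact (D * U) := hD.mul hU
        have hsub : σd ⁻¹' C ⊆ QuotientGroup.mk '' (σ ⁻¹' (D * U)) := by
          rintro q hq
          obtain ⟨x, rfl⟩ := QuotientGroup.mk_surjective q
          have hx : (QuotientGroup.mk (σ x) : H ⧸ Kb) ∈ C := hq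
          obtain ⟨d, hd, hde⟩ := hDC hx
          -- mk d = mk (σ x), so d⁻¹ * σ x ∈ Kb
          have hk : d⁻¹ * σ x ∈ Kb := (QuotientGroup.eq).mp hde
          set k := d⁻¹ * σ x with hkdef
          -- k ∈ closure (σ '' N); find n ∈ N with σ n ∈ k * U⁻¹
          have hknb : (fun h => k * h) '' U⁻¹ ∈ nhds k := by
            have : (fun h => k * h) '' U⁻¹ = (fun h => k * h) '' U⁻¹ := rfl
            have hU' : U⁻¹ ∈ nhds (1 : H) := by
              simpa using (continuous_inv.continuousAt (x := (1:H))).preimage_mem_nhds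
                (by simpa using hU1)
            have := (Homeomorph.mulLeft k).isOpenMap -- not needed
            have : (fun h => k * h) '' U⁻¹ ∈ nhds (k * 1) :=
              (Homeomorph.mulLeft k).isOpenMap.image_mem_nhds hU'
            simpa using this
          have hkcl : k ∈ closure ((N.map σ) : Set H) := hk
          obtain ⟨m, hm1, hm2⟩ := mem_closure_iff_nhds.mp hkcl _ hknb
          obtain ⟨u, huU, hue⟩ := hm1
          obtain ⟨n, hnN, hns⟩ := hm2
          -- d * m * u⁻¹ : σ x = d * k = d * (m * u⁻¹)
          have hσx : σ x = d * m * u⁻¹ := by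
            have hm : m = k * u := hue.symm
            rw [hm, hkdef]
            group
          -- normality: d * m = m' * d with m' ∈ N.map σ
          have hm' : d * m * d⁻¹ ∈ N.map σ := by
            rw [← hns]
            exact Subgroup.Normal.conj_mem ‹(N.map σ).Normal› _ ⟨n, hnN, rfl⟩ d
          obtain ⟨n', hn'N, hn's⟩ := hm'
          have hfinal : σ (n'⁻¹ * x) ∈ D * U := by
            have : σ (n'⁻¹ * x) = d * u⁻¹ := by
              rw [map_mul, map_inv, hn's, hσx]
              group
            rw [this]
            refine mul_mem_mul hd ?_
            simpa using huU
          refine ⟨n'⁻¹ * x, hfinal, ?_⟩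
          apply (QuotientGroup.eq).mpr
          have : (n'⁻¹ * x)⁻¹ * x = x⁻¹ * n' * x := by group
          rw [this]
          exact Subgroup.Normal.conj_mem' ‹N.Normal› _ hn'N x
        have himg : IsCompact (QuotientGroup.mk '' (σ ⁻¹' (D * U)) : Set (G ⧸ N)) :=
          (hp _ hDU).image continuous_quot_mk
        exact IsCompact.of_isClosed_subset himg (hC.isClosed.preimage hσdc) hsub
    · -- converse
      rintro ⟨hρp, hqp⟩ C hC
      have hC' : IsCompact ((QuotientGroup.mk : H → H ⧸ Kb) '' C) :=
        hC.image continuous_quot_mk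
      have hpre : IsCompact (σd ⁻¹' ((QuotientGroup.mk : H → H ⧸ Kb) '' C)) := hqp _ hC'
      obtain ⟨E, hE, hEsub⟩ := lift_compact' (QuotientGroup.isOpenMap_coe (N := N))
        QuotientGroup.mk_surjective hpre
      set L := (σ '' E)⁻¹ * C with hL
      have hLc : IsCompact L := (hE.image hσ).inv.mul hC
      have hSc : IsCompact (((↑) : Kb → H) ⁻¹' L) := by
        rw [Subtype.isCompact_iff]
        have : ((↑) : Kb → H) '' (((↑) : Kb → H) ⁻¹' L) = L ∩ (Kb : Set H) := by
          rw [image_preimage_eq_inter_range, Subtype.range_coe]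
        rw [this]
        exact hLc.inter_right hKbc
      have hFc : IsCompact (ρ ⁻¹' (((↑) : Kb → H) ⁻¹' L)) := hρp _ hSc
      have hsub : σ ⁻¹' C ⊆ E * (((↑) : N → G) '' (ρ ⁻¹' (((↑) : Kb → H) ⁻¹' L))) := by
        intro x hx
        have hmk : (QuotientGroup.mk x : G ⧸ N) ∈ σd ⁻¹' ((QuotientGroup.mk : H → H ⧸ Kb) '' C) :=
          ⟨σ x, hx, rfl⟩
        obtain ⟨e, heE, hee⟩ := hEsub hmk
        have hn : e⁻¹ * x ∈ N := (QuotientGroup.eq).mp hee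
        have hσn : σ (e⁻¹ * x) ∈ L := by
          have h1 : σ (e⁻¹ * x) = (σ e)⁻¹ * σ x := by rw [map_mul, map_inv]
          rw [h1, hL]
          exact mul_mem_mul (Set.inv_mem_inv.mpr ⟨e, heE, rfl⟩) hx
        refine ⟨e, heE, e⁻¹ * x, ⟨⟨e⁻¹ * x, hn⟩, hσn, rfl⟩, by group⟩
      have hcmp : IsCompact (E * (((↑) : N → G) '' (ρ ⁻¹' (((↑) : Kb → H) ⁻¹' L)))) :=
        hE.mul (hFc.image continuous_subtype_val)
      exact IsCompact.of_isClosed_subset hcmp (hC.isClosed.preimage hσ) hsub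
  · intro hp
    have hprop : IsProperMap σ :=
      isProperMap_iff_isCompact_preimage.mpr ⟨hσ, fun K hK => hp K hK⟩
    exact hprop.isClosedMap.isClosed_range
end

section
/- Let (G, σ, p) be a Brascamp–Lieb datum with BL(G, σ, p) < ∞. Then the homomorphism σ = (σ_1, …, σ_J) : G → G_1 × ⋯ × G_J is a proper map, and for every j, either σ_j : G → G_j is an open map or p_j = ∞. -/
open MeasureTheory ENNReal
open Set Filter Topology
open scoped Pointwise

noncomputable section

/-- The Brascamp–Lieb constant associated to measures `μ` on `G`, `ν j` on `Gj j`,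
maps `σ j : G → Gj j` and exponents `p j ∈ [1, ∞]`: the least `C ∈ [0, ∞]` such that
`∫⁻ ∏ j, f j (σ j x) ∂μ ≤ C * ∏ j, ‖f j‖_{L^{p j}(ν j)}` for all nonnegative continuous
compactly supported inputs `f j`, with value `∞` if no such finite constant exists. -/
def BLConst {J : Type*} [Fintype J]
    {G : Type*} [TopologicalSpace G] [MeasurableSpace G]
    {Gj : J → Type*} [∀ j, TopologicalSpace (Gj j)] [∀ j, MeasurableSpace (Gj j)]
    (μ : Measure G) (ν : ∀ j, Measure (Gj j))
    (σ : ∀ j, G → Gj j) (p : J → ℝ≥0∞) : ℝ≥0∞ :=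
  sInf {C : ℝ≥0∞ | ∀ f : ∀ j, Gj j → ℝ,
    (∀ j, Continuous (f j)) → (∀ j, HasCompactSupport (f j)) →
    (∀ j, ∀ y, 0 ≤ f j y) →
    ∫⁻ x, ∏ j, ENNReal.ofReal (f j (σ j x)) ∂μ ≤
      C * ∏ j, eLpNorm (f j) (p j) (ν j)}

section BLaux



/-- A closed set whose thickening by a relatively compact open neighborhood of `1` has
finite Haar measure is compact. -/
theorem BLaux_compact_of_mul_finite {G : Type*} [Group G] [TopologicalSpace G]
    [IsTopologicalGroup G] [T2Space G] [MeasurableSpace G] [BorelSpace G]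
    (μ : Measure G) [μ.IsHaarMeasure] {L W : Set G} (hL : IsClosed L) (hWo : IsOpen W)
    (h1W : (1:G) ∈ W) (hWc : IsCompact (closure W)) (hfin : μ (L * W) ≠ ∞) :
    IsCompact L := by
  haveI := Classical.decEq G
  obtain ⟨V, hVo, h1V, hVV⟩ := exists_open_nhds_one_mul_subset (hWo.mem_nhds h1W)
  set V' : Set G := V ∩ V⁻¹ with hV'def
  have hV'o : IsOpen V' := hVo.inter hVo.inv
  have h1V' : (1:G) ∈ V' := ⟨h1V, by simpa using h1V⟩
  have hmul : ∀ a ∈ V', ∀ b ∈ V', a * b⁻¹ ∈ W := by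
    intro a ha b hb
    exact hVV (Set.mul_mem_mul ha.1 hb.2)
  have hV'W : V' ⊆ W := fun v hv => by
    have := hmul v hv 1 h1V'
    simpa using this
  by_cases hF : ∃ F : Finset G, L ⊆ ↑F * W
  · obtain ⟨F, hFsub⟩ := hF
    have hcW : (↑F : Set G) * closure W ⊆ (↑F : Set G) * closure W := subset_rfl
    have hcomp : IsCompact ((↑F : Set G) * closure W) := (F.finite_toSet.isCompact).mul hWc
    exact hcomp.of_isClosed_subset hL
      (hFsub.trans (Set.mul_subset_mul_left subset_closure))
  · push_neg at hF
    have hch : ∀ F : Finset G, ∃ x, x ∈ L ∧ x ∉ ↑F * W := fun F => by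
      obtain ⟨x, hx1, hx2⟩ := Set.not_subset.mp (hF F)
      exact ⟨x, hx1, hx2⟩
    let g : Finset G → G := fun F => (hch F).choose
    let T : ℕ → Finset G := fun n => Nat.rec ∅ (fun _ Fp => insert (g Fp) Fp) n
    let x : ℕ → G := fun n => g (T n)
    have hTsucc : ∀ n, T (n+1) = insert (x n) (T n) := fun n => rfl
    have hmono : ∀ m n, m ≤ n → T m ⊆ T n := by
      intro m n h
      induction h with
      | refl => exact subset_rfl
      | step _ ih => exact ih.trans (by rw [hTsucc]; exact Finset.subset_insert _ _)
    have hxdef : ∀ n, x n = (hch (T n)).choose := fun n => rfl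
    have hxL : ∀ n, x n ∈ L := fun n => by rw [hxdef]; exact (hch (T n)).choose_spec.1
    have hxn : ∀ n, x n ∉ (SetLike.coe (T n)) * W := fun n => by
      rw [hxdef]; exact (hch (T n)).choose_spec.2
    have hmem : ∀ m n, m < n → x m ∈ T n := by
      intro m n h
      have : x m ∈ T (m+1) := by rw [hTsucc]; exact Finset.mem_insert_self _ _
      exact hmono _ _ h this
    have key : ∀ m n, m < n → x n ∉ x m • W := by
      intro m n h hmemW
      obtain ⟨w, hw, hxw⟩ := hmemW
      exact hxn n ⟨x m, by exact_mod_cast hmem m n h, w, hw, hxw⟩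
    have H : ∀ m n, m < n → Disjoint (x m • V') (x n • V') := by
      intro m n h
      rw [Set.disjoint_left]
      rintro y ⟨a, ha, rfl⟩ ⟨b, hb, hy⟩
      apply key m n h
      refine ⟨a * b⁻¹, hmul a ha b hb, ?_⟩
      have : x n * b = x m * a := by simpa [smul_eq_mul] using hy
      simp only [smul_eq_mul]
      rw [← mul_assoc, ← this, mul_assoc, mul_inv_cancel, mul_one]
    have hdisj : Pairwise (Function.onFun Disjoint fun n => x n • V') := by
      intro m n hmn
      rcases hmn.lt_or_gt with h | h
      · exact H m n h
      · exact (H n m h).symm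
    have hsub : (⋃ n, x n • V') ⊆ L * W := by
      refine Set.iUnion_subset fun n => ?_
      rintro y ⟨a, ha, rfl⟩
      exact Set.mul_mem_mul (hxL n) (hV'W ha)
    have hmeasU : μ (⋃ n, x n • V') = ∑' n, μ (x n • V') :=
      measure_iUnion hdisj fun n => (hV'o.smul _).measurableSet
    have hsmul : ∀ n, μ (x n • V') = μ V' := fun n => measure_smul μ (x n) V'
    have htop : μ (⋃ n, x n • V') = ∞ := by
      rw [hmeasU]
      simp only [hsmul]
      exact ENNReal.tsum_const_eq_top_of_ne_zero (hV'o.measure_ne_zero μ ⟨1, h1V'⟩)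
    exact (hfin (top_le_iff.mp (htop ▸ measure_mono hsub))).elim




/-- Finitely many pairwise disjoint compact sets in a `T2` space can be separated by
pairwise disjoint open sets. -/
theorem BLaux_disjoint_opens {X : Type*} [TopologicalSpace X] [T2Space X] (n : ℕ)
    (K : ℕ → Set X) (hK : ∀ i, IsCompact (K i)) (hd : ∀ i j, i < j → Disjoint (K i) (K j)) :
    ∃ U : ℕ → Set X, (∀ i, IsOpen (U i)) ∧ (∀ i, i < n → K i ⊆ U i) ∧
      ∀ i j, i < j → j < n → Disjoint (U i) (U j) := by
  induction n with
  | zero => exact ⟨fun _ => univ, fun _ => isOpen_univ, fun i hi => by omega,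
      fun i j _ hj => by omega⟩
  | succ n ih =>
    obtain ⟨U, hUo, hUsub, hUd⟩ := ih
    have hB : IsCompact (⋃ i ∈ Finset.range n, K i) :=
      (Finset.range n).isCompact_biUnion (fun i _ => hK i)
    have hdisj : Disjoint (⋃ i ∈ Finset.range n, K i) (K n) := by
      refine Set.disjoint_left.mpr ?_
      rintro x hx hxn
      obtain ⟨i, hi, hxi⟩ := Set.mem_iUnion₂.mp hx
      exact Set.disjoint_left.mp (hd i n (Finset.mem_range.mp hi)) hxi hxn
    obtain ⟨B', A, hB'o, hAo, hBB', hKA, hBA⟩ :=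
      SeparatedNhds.of_isCompact_isCompact hB (hK n) hdisj
    refine ⟨fun i => if i = n then A else U i ∩ B', fun i => ?_, fun i hi => ?_, ?_⟩
    · by_cases h : i = n <;> simp [h, hAo, (hUo i).inter hB'o]
    · rcases Nat.lt_succ_iff_lt_or_eq.mp hi with h | h
      · simp only [if_neg h.ne]
        exact subset_inter (hUsub i h) ((Set.subset_biUnion_of_mem (Finset.mem_range.mpr h)).trans hBB')
      · simp [h, hKA]
    · intro i j hij hj
      rcases Nat.lt_succ_iff_lt_or_eq.mp hj with h | h
      · simp only [if_neg (hij.trans h).ne, if_neg h.ne]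
        exact ((hUd i j hij h).mono inter_subset_left inter_subset_left)
      · subst h
        simp only [if_neg hij.ne, if_pos rfl]
        exact (hBA.symm.mono_right inter_subset_right).symm


/-- A finite union of closed sets with empty interior has empty interior. -/
theorem BLaux_interior_biUnion_empty {X α : Type*} [TopologicalSpace X] (T : Finset α)
    (f : α → Set X) (hcl : ∀ y, IsClosed (f y)) (hint : ∀ y, interior (f y) = ∅) :
    interior (⋃ y ∈ T, f y) = ∅ := by
  classical
  induction T using Finset.induction with
  | empty => simp
  | @insert a s hx ih =>
    rw [Finset.set_biUnion_insert]
    rw [interior_union_isClosed_of_interior_empty (hcl a) ih]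
    exact hint a

/-- A group homomorphism sending neighborhoods of `1` to neighborhoods of `1` is open. -/
theorem BLaux_isOpenMap {G H : Type*} [Group G] [Group H] [TopologicalSpace G]
    [TopologicalSpace H] [IsTopologicalGroup G] [IsTopologicalGroup H] (σ : G →* H)
    (h : ∀ W ∈ 𝓝 (1:G), σ '' W ∈ 𝓝 (1:H)) : IsOpenMap σ := by
  intro U hU
  rw [isOpen_iff_mem_nhds]
  rintro _ ⟨x, hx, rfl⟩
  have h1 : (x⁻¹ • U) ∈ 𝓝 (1:G) := by
    refine (hU.smul x⁻¹).mem_nhds ?_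
    exact ⟨x, hx, by simp⟩
  have h2 : σ '' (x⁻¹ • U) ∈ 𝓝 (1:H) := h _ h1
  have h3 : σ x • (σ '' (x⁻¹ • U)) ∈ 𝓝 (σ x) := by
    simpa using smul_mem_nhds_smul (σ x) h2
  convert h3 using 1
  ext y
  constructor
  · rintro ⟨z, hz, rfl⟩
    exact ⟨σ (x⁻¹ * z), ⟨x⁻¹ * z, ⟨z, hz, rfl⟩, rfl⟩, by simp [smul_eq_mul, ← map_mul]⟩
  · rintro ⟨_, ⟨_, ⟨z, hz, rfl⟩, rfl⟩, rfl⟩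
    exact ⟨x * (x⁻¹ • z), by simpa [smul_eq_mul] using hz, by simp [smul_eq_mul, map_mul]⟩

/-- `eLpNorm` bound for a `[0,1]`-valued function vanishing outside a measurable set. -/
theorem BLaux_eLpNorm_le {X : Type*} [MeasurableSpace X] (ν : Measure X) {f : X → ℝ}
    {U : Set X} (hU : MeasurableSet U) (h01 : ∀ x, f x ∈ Set.Icc (0:ℝ) 1)
    (hsupp : ∀ x ∉ U, f x = 0) {p : ℝ≥0∞} (hp : p ≠ 0) (hp' : p ≠ ∞) :
    eLpNorm f p ν ≤ ν U ^ (1 / p.toReal) := by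
  have : eLpNorm f p ν ≤ eLpNorm (U.indicator fun _ => (1:ℝ)) p ν := by
    refine eLpNorm_mono fun x => ?_
    by_cases hx : x ∈ U
    · simp only [Set.indicator_of_mem hx]
      simpa [Real.norm_eq_abs, abs_of_nonneg (h01 x).1] using (h01 x).2
    · simp [hsupp x hx, Set.indicator_of_notMem hx]
  refine this.trans ?_
  rw [eLpNorm_indicator_const hU hp hp']
  simp



theorem BLaux_bump {X : Type*} [TopologicalSpace X] [T2Space X] [LocallyCompactSpace X]
    {Q : Set X} (hQ : IsCompact Q) :
    ∃ f : X → ℝ, Continuous f ∧ HasCompactSupport f ∧ (∀ y, f y ∈ Set.Icc (0:ℝ) 1) ∧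
      ∀ y ∈ Q, f y = 1 := by
  obtain ⟨f, hf1, _, hfc, hf01⟩ :=
    exists_continuous_one_zero_of_isCompact hQ isClosed_empty (by simp)
  exact ⟨f, f.continuous, hfc, hf01, fun y hy => hf1 hy⟩

section Main

variable {J : Type*} [Fintype J]
    {G : Type*} [Group G] [TopologicalSpace G] [IsTopologicalGroup G] [LocallyCompactSpace G]
    [T2Space G] [MeasurableSpace G] [BorelSpace G]
    (μ : Measure G) [μ.IsHaarMeasure]
    {Gj : J → Type*} [∀ j, Group (Gj j)] [∀ j, TopologicalSpace (Gj j)]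
    [∀ j, IsTopologicalGroup (Gj j)] [∀ j, LocallyCompactSpace (Gj j)] [∀ j, T2Space (Gj j)]
    [∀ j, MeasurableSpace (Gj j)] [∀ j, BorelSpace (Gj j)]
    (ν : ∀ j, Measure (Gj j)) [∀ j, (ν j).IsHaarMeasure]
    (σ : ∀ j, G →* Gj j)
    (p : J → ℝ≥0∞)

/-- Properness part. -/
theorem BLaux_proper (hσ : ∀ j, Continuous (σ j)) {C : ℝ≥0∞} (hClt : C < ∞)
    (hC : ∀ f : ∀ j, Gj j → ℝ,
      (∀ j, Continuous (f j)) → (∀ j, HasCompactSupport (f j)) →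
      (∀ j, ∀ y, 0 ≤ f j y) →
      ∫⁻ x, ∏ j, ENNReal.ofReal (f j (σ j x)) ∂μ ≤
        C * ∏ j, eLpNorm (f j) (p j) (ν j))
    (K : Set (∀ j, Gj j)) (hK : IsCompact K) : IsCompact (Pi.monoidHom σ ⁻¹' K) := by
  classical
  set L : Set G := Pi.monoidHom σ ⁻¹' K with hLdef
  have hΦc : Continuous (Pi.monoidHom σ) := continuous_pi hσ
  have hLcl : IsClosed L := hK.isClosed.preimage hΦc
  obtain ⟨V₀, hV₀c, hV₀mem⟩ := exists_compact_mem_nhds (1:G)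
  have hWo : IsOpen (interior V₀) := isOpen_interior
  have h1W : (1:G) ∈ interior V₀ := mem_interior_iff_mem_nhds.mpr hV₀mem
  have hclW : IsCompact (closure (interior V₀)) := hV₀c.closure_of_subset interior_subset
  have hQc : ∀ i, IsCompact (((fun φ : ∀ j, Gj j => φ i) '' K) * ((σ i) '' V₀)) :=
    fun i => (hK.image (continuous_apply i)).mul (hV₀c.image (hσ i))
  choose F hFcont hFsupp hF01 hF1 using fun i => BLaux_bump (hQc i)
  have hint := hC F hFcont hFsupp (fun i y => (hF01 i y).1)
  have hmeasLW : MeasurableSet (L * interior V₀) := (hWo.mul_left).measurableSet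
  have hone : ∀ x ∈ L * interior V₀, (1:ℝ≥0∞) ≤ ∏ i, ENNReal.ofReal (F i (σ i x)) := by
    rintro x ⟨l, hl, w, hw, rfl⟩
    have h1 : ∀ i, F i (σ i l * σ i w) = 1 := by
      intro i
      exact hF1 i _ (Set.mul_mem_mul ⟨Pi.monoidHom σ l, hl, rfl⟩ ⟨w, interior_subset hw, rfl⟩)
    simp [map_mul, h1]
  have hlow : μ (L * interior V₀) ≤ ∫⁻ x, ∏ i, ENNReal.ofReal (F i (σ i x)) ∂μ := by
    calc μ (L * interior V₀) = ∫⁻ _ in L * interior V₀, 1 ∂μ := (setLIntegral_one _).symm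
    _ ≤ ∫⁻ x in L * interior V₀, ∏ i, ENNReal.ofReal (F i (σ i x)) ∂μ :=
        setLIntegral_mono' hmeasLW hone
    _ ≤ _ := setLIntegral_le_lintegral _ _
  have hfin : μ (L * interior V₀) ≠ ∞ := by
    have hlt : C * ∏ i, eLpNorm (F i) (p i) (ν i) < ∞ :=
      ENNReal.mul_lt_top hClt (ENNReal.prod_lt_top fun i _ =>
        ((hFcont i).memLp_of_hasCompactSupport (hFsupp i)).eLpNorm_lt_top)
    exact ((hlow.trans hint).trans_lt hlt).ne
  exact BLaux_compact_of_mul_finite μ hLcl hWo h1W hclW hfin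

/-- Openness part. -/
theorem BLaux_open (hσ : ∀ j, Continuous (σ j)) (hp : ∀ j, 1 ≤ p j) {C : ℝ≥0∞} (hClt : C < ∞)
    (hC : ∀ f : ∀ j, Gj j → ℝ,
      (∀ j, Continuous (f j)) → (∀ j, HasCompactSupport (f j)) →
      (∀ j, ∀ y, 0 ≤ f j y) →
      ∫⁻ x, ∏ j, ENNReal.ofReal (f j (σ j x)) ∂μ ≤
        C * ∏ j, eLpNorm (f j) (p j) (ν j))
    (j : J) (hpj : p j ≠ ∞) : IsOpenMap (σ j) := by
  classical
  refine BLaux_isOpenMap (σ j) ?_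
  intro W hW
  by_contra hnot
  -- a compact symmetric-type neighborhood V of 1 in G
  obtain ⟨A, hAo, h1A, hAA⟩ := exists_open_nhds_one_mul_subset hW
  obtain ⟨B, hBo, h1B, hBB⟩ := exists_open_nhds_one_mul_subset (hAo.mem_nhds h1A)
  have hDo : IsOpen (B ∩ B⁻¹) := hBo.inter hBo.inv
  have h1D : (1:G) ∈ B ∩ B⁻¹ := ⟨h1B, by simpa using h1B⟩
  obtain ⟨V, hVc, h1V, hVD⟩ := exists_compact_subset hDo h1D
  set S : Set (Gj j) := σ j '' V with hSdef
  have hSc : IsCompact S := hVc.image (hσ j)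
  have hVA : V * V⁻¹ ⊆ A := by
    refine Set.Subset.trans (Set.mul_subset_mul ?_ ?_) hBB
    · exact hVD.trans inter_subset_left
    · intro b hb
      have : b⁻¹ ∈ B ∩ B⁻¹ := hVD (Set.mem_inv.mp hb)
      simpa using this.2
  -- S * S⁻¹ is closed with empty interior
  have hSinv : S⁻¹ = σ j '' (V⁻¹) := by
    ext y
    simp only [Set.mem_inv, hSdef, Set.mem_image]
    constructor
    · rintro ⟨v, hv, hvy⟩
      exact ⟨v⁻¹, Set.inv_mem_inv.mpr hv, by rw [map_inv, hvy, inv_inv]⟩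
    · rintro ⟨v, hv, rfl⟩
      exact ⟨v⁻¹, Set.mem_inv.mp hv, by rw [map_inv]⟩
  have hSSimg : S * S⁻¹ = σ j '' (V * V⁻¹) := by
    rw [hSinv, hSdef, Set.image_mul]
  have hE4 : (S * S⁻¹) * (S * S⁻¹) ⊆ σ j '' W := by
    rw [hSSimg, ← Set.image_mul]
    exact Set.image_mono ((Set.mul_subset_mul hVA hVA).trans hAA)
  have hEcl : IsClosed (S * S⁻¹) := (hSc.mul hSc.inv).isClosed
  have hEsymm : (S * S⁻¹)⁻¹ = S * S⁻¹ := by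
    rw [mul_inv_rev, inv_inv]
  have hEint : interior (S * S⁻¹) = ∅ := by
    by_contra h
    obtain ⟨z, hz⟩ := Set.nonempty_iff_ne_empty.mpr h
    apply hnot
    have hzo : IsOpen (z⁻¹ • interior (S * S⁻¹)) := isOpen_interior.smul _
    have h1z : (1:Gj j) ∈ z⁻¹ • interior (S * S⁻¹) := ⟨z, hz, by simp⟩
    have hsub : z⁻¹ • interior (S * S⁻¹) ⊆ σ j '' W := by
      rintro _ ⟨y, hy, rfl⟩
      have hz' : z⁻¹ ∈ S * S⁻¹ := by
        rw [← hEsymm]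
        exact Set.inv_mem_inv.mpr (interior_subset hz)
      have : z⁻¹ * y ∈ (S * S⁻¹) * (S * S⁻¹) :=
        Set.mul_mem_mul hz' (interior_subset hy)
      simpa [smul_eq_mul] using hE4 this
    exact Filter.mem_of_superset (hzo.mem_nhds h1z) hsub
  -- Brascamp–Lieb lower bound: every open set containing S has measure bounded below
  have hm0 : μ (interior V) ≠ 0 := isOpen_interior.measure_ne_zero μ ⟨1, h1V⟩
  choose F hFcont hFsupp hF01 hF1 using fun i => BLaux_bump (hVc.image (hσ i))
  set M : ℝ≥0∞ := ∏ i ∈ Finset.univ.erase j, eLpNorm (F i) (p i) (ν i) with hMdef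
  have hMne : M ≠ ∞ :=
    (ENNReal.prod_lt_top fun i _ =>
      ((hFcont i).memLp_of_hasCompactSupport (hFsupp i)).eLpNorm_lt_top).ne
  have hpj0 : p j ≠ 0 := (lt_of_lt_of_le zero_lt_one (hp j)).ne'
  set τ : ℝ := 1 / (p j).toReal with hτdef
  have hτpos : 0 < τ := one_div_pos.mpr (ENNReal.toReal_pos hpj0 hpj)
  have HU : ∀ U : Set (Gj j), IsOpen U → S ⊆ U →
      μ (interior V) ≤ (C * M) * (ν j U) ^ τ := by
    intro U hUo hSU
    obtain ⟨h, hh1, hh0, hhc, hh01⟩ := exists_continuous_one_zero_of_isCompact hSc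
      hUo.isClosed_compl (Set.disjoint_left.mpr fun x hx hxc => hxc (hSU hx))
    set f : ∀ i, Gj i → ℝ := Function.update (fun i => F i) j ⇑h with hfdef
    have hfj : f j = ⇑h := Function.update_self j (⇑h) (fun i => (F i : Gj i → ℝ))
    have hfi : ∀ i, i ≠ j → f i = F i := fun i hij => Function.update_of_ne hij _ _
    have hcont : ∀ i, Continuous (f i) := by
      intro i
      rcases eq_or_ne i j with rfl | hij
      · rw [hfj]; exact h.continuous
      · rw [hfi i hij]; exact hFcont i
    have hsupp : ∀ i, HasCompactSupport (f i) := by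
      intro i
      rcases eq_or_ne i j with rfl | hij
      · rw [hfj]; exact hhc
      · rw [hfi i hij]; exact hFsupp i
    have hnn : ∀ i, ∀ y, 0 ≤ f i y := by
      intro i y
      rcases eq_or_ne i j with rfl | hij
      · rw [hfj]; exact (hh01 y).1
      · rw [hfi i hij]; exact (hF01 i y).1
    have hint := hC f hcont hsupp hnn
    have hone : ∀ x ∈ interior V, (1:ℝ≥0∞) ≤ ∏ i, ENNReal.ofReal (f i (σ i x)) := by
      intro x hx
      have h1 : ∀ i, f i (σ i x) = 1 := by
        intro i
        rcases eq_or_ne i j with rfl | hij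
        · rw [hfj]
          exact hh1 ⟨x, interior_subset hx, rfl⟩
        · rw [hfi i hij]
          exact hF1 i _ ⟨x, interior_subset hx, rfl⟩
      simp [h1]
    have hlow : μ (interior V) ≤ ∫⁻ x, ∏ i, ENNReal.ofReal (f i (σ i x)) ∂μ := by
      calc μ (interior V) = ∫⁻ _ in interior V, 1 ∂μ := (setLIntegral_one _).symm
      _ ≤ ∫⁻ x in interior V, ∏ i, ENNReal.ofReal (f i (σ i x)) ∂μ :=
          setLIntegral_mono' isOpen_interior.measurableSet hone
      _ ≤ _ := setLIntegral_le_lintegral _ _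
    have hprod : ∏ i, eLpNorm (f i) (p i) (ν i) = eLpNorm (⇑h) (p j) (ν j) * M := by
      rw [hMdef, ← Finset.mul_prod_erase Finset.univ
        (fun i => eLpNorm (f i) (p i) (ν i)) (Finset.mem_univ j), hfj]
      congr 1
      exact Finset.prod_congr rfl fun i hi => by rw [hfi i (Finset.ne_of_mem_erase hi)]
    have hnorm : eLpNorm (⇑h) (p j) (ν j) ≤ ν j U ^ τ :=
      BLaux_eLpNorm_le (ν j) hUo.measurableSet hh01
        (fun x hx => hh0 (Set.mem_compl hx)) hpj0 hpj
    calc μ (interior V) ≤ C * ∏ i, eLpNorm (f i) (p i) (ν i) := hlow.trans hint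
    _ = C * (eLpNorm (⇑h) (p j) (ν j) * M) := by rw [hprod]
    _ ≤ C * (ν j U ^ τ * M) := by gcongr
    _ = (C * M) * (ν j U) ^ τ := by ring
  -- extract a uniform positive lower bound for measures of open sets containing translates of S
  set c₀ : ℝ≥0∞ := (μ (interior V) / (C * M)) ^ (1/τ) ⊓ 1 with hc₀def
  have hc₀pos : c₀ ≠ 0 := by
    have hbase : (0:ℝ≥0∞) < μ (interior V) / (C * M) :=
      ENNReal.div_pos hm0 (ENNReal.mul_ne_top hClt.ne hMne)
    have : (0:ℝ≥0∞) < (μ (interior V) / (C * M)) ^ (1/τ) := by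
      rcases eq_or_ne (μ (interior V) / (C * M)) ∞ with htop | htop
      · rw [htop, ENNReal.top_rpow_of_pos (one_div_pos.mpr hτpos)]; exact ENNReal.zero_lt_top
      · exact ENNReal.rpow_pos hbase htop
    exact (lt_min this zero_lt_one).ne'
  have hc₀top : c₀ ≠ ∞ := by
    rw [hc₀def]
    exact (min_le_right _ _).trans_lt ENNReal.one_lt_top |>.ne
  have hc₀le : ∀ (g : Gj j) (U : Set (Gj j)), IsOpen U → g • S ⊆ U → ν j U ≠ ∞ →
      c₀ ≤ ν j U := by
    intro g U hUo hgS hUfin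
    have hb := HU (g⁻¹ • U) (hUo.smul _) (fun s hs =>
      Set.mem_inv_smul_set_iff.mpr (hgS (Set.smul_mem_smul_set hs)))
    rw [measure_smul] at hb
    rcases eq_or_ne (C * M) 0 with hCM | hCM
    · exfalso
      rw [hCM, zero_mul] at hb
      exact hm0 (le_antisymm hb (zero_le))
    · have hCMtop : C * M ≠ ∞ := ENNReal.mul_ne_top hClt.ne hMne
      have hdiv : μ (interior V) / (C * M) ≤ (ν j U) ^ τ :=
        (ENNReal.div_le_iff hCM hCMtop).mpr (by rw [mul_comm] at hb; exact hb)
      have hr := ENNReal.rpow_le_rpow hdiv (le_of_lt (one_div_pos.mpr hτpos))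
      rw [← ENNReal.rpow_mul, mul_one_div_cancel hτpos.ne', ENNReal.rpow_one] at hr
      exact (min_le_left _ _).trans hr
  -- counting argument
  obtain ⟨N₀, hN₀c, hN₀mem⟩ := exists_compact_mem_nhds (1 : Gj j)
  obtain ⟨Kb, hKbc, hKbsub⟩ := exists_compact_superset (hN₀c.mul hSc)
  set O : Set (Gj j) := interior Kb with hOdef
  have hOfin : ν j O ≠ ∞ := ((measure_mono interior_subset).trans_lt hKbc.measure_lt_top).ne
  obtain ⟨n, hn⟩ := ENNReal.exists_nat_gt (ENNReal.div_lt_top hOfin hc₀pos).ne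
  have hn' : ν j O < n * c₀ :=
    (ENNReal.div_lt_iff (Or.inl hc₀pos) (Or.inl hc₀top)).mp hn
  -- recursively construct translates
  have hpick : ∀ T : Finset (Gj j), ∃ z, z ∈ interior N₀ ∧ ∀ y ∈ T, z ∉ y • (S * S⁻¹) := by
    intro T
    have hintT : interior (⋃ y ∈ T, y • (S * S⁻¹)) = ∅ :=
      BLaux_interior_biUnion_empty T _ (fun y => hEcl.smul y)
        (fun y => by rw [interior_smul, hEint]; simp)
    have hns : ¬ (interior N₀ ⊆ ⋃ y ∈ T, y • (S * S⁻¹)) := by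
      intro hsub
      have h2 := interior_maximal hsub isOpen_interior
      rw [hintT] at h2
      exact h2 (mem_interior_iff_mem_nhds.mpr hN₀mem)
    obtain ⟨z, hz1, hz2⟩ := Set.not_subset.mp hns
    exact ⟨z, hz1, fun y hy hmem => hz2 (Set.mem_biUnion hy hmem)⟩
  let gsel : Finset (Gj j) → Gj j := fun T => (hpick T).choose
  let Ts : ℕ → Finset (Gj j) := fun n => Nat.rec ∅ (fun _ T => insert (gsel T) T) n
  let g : ℕ → Gj j := fun n => gsel (Ts n)
  have hgdef : ∀ n, g n = (hpick (Ts n)).choose := fun n => rfl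
  have hTsucc : ∀ n, Ts (n+1) = insert (g n) (Ts n) := fun n => rfl
  have hTmono : ∀ a b, a ≤ b → Ts a ⊆ Ts b := by
    intro a b hab
    induction hab with
    | refl => exact subset_rfl
    | step _ ih => exact ih.trans (by rw [hTsucc]; exact Finset.subset_insert _ _)
  have hgN₀ : ∀ n, g n ∈ interior N₀ := fun n => by
    rw [hgdef]; exact (hpick (Ts n)).choose_spec.1
  have hgnot : ∀ n, ∀ y ∈ Ts n, g n ∉ y • (S * S⁻¹) := fun n => by
    rw [hgdef]; exact (hpick (Ts n)).choose_spec.2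
  have hgmem : ∀ a b, a < b → g a ∈ Ts b := by
    intro a b hab
    have : g a ∈ Ts (a+1) := by rw [hTsucc]; exact Finset.mem_insert_self _ _
    exact hTmono _ _ hab this
  have hgd : ∀ a b, a < b → Disjoint (g a • S) (g b • S) := by
    intro a b hab
    rw [Set.disjoint_left]
    rintro y ⟨s, hs, rfl⟩ ⟨s', hs', hy⟩
    refine hgnot b (g a) (hgmem a b hab) ⟨s * s'⁻¹, Set.mul_mem_mul hs (Set.inv_mem_inv.mpr hs'), ?_⟩
    simp only [smul_eq_mul] at hy ⊢
    rw [← mul_assoc, ← hy, mul_assoc, mul_inv_cancel, mul_one]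
  obtain ⟨U, hUo, hUsub, hUd⟩ := BLaux_disjoint_opens n (fun i => g i • S)
    (fun i => hSc.smul _) (fun a b hab => hgd a b hab)
  have hsubO : ∀ i, g i • S ⊆ O := by
    intro i y hy
    obtain ⟨s, hs, rfl⟩ := hy
    exact hKbsub (Set.mul_mem_mul (interior_subset (hgN₀ i)) hs)
  have hboundi : ∀ i, i < n → c₀ ≤ ν j (U i ∩ O) := fun i hi =>
    hc₀le (g i) (U i ∩ O) ((hUo i).inter isOpen_interior)
      (Set.subset_inter (hUsub i hi) (hsubO i))
      ((measure_mono inter_subset_right).trans_lt (lt_top_iff_ne_top.mpr hOfin)).ne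
  have hsum : (n : ℝ≥0∞) * c₀ ≤ ν j O := by
    have hdisjU : (↑(Finset.range n) : Set ℕ).PairwiseDisjoint fun i => U i ∩ O := by
      intro a ha b hb hab
      rcases hab.lt_or_gt with h | h
      · exact (hUd a b h (by simpa using hb)).mono inter_subset_left inter_subset_left
      · exact ((hUd b a h (by simpa using ha)).mono inter_subset_left inter_subset_left).symm
    calc (n:ℝ≥0∞) * c₀ = ∑ _i ∈ Finset.range n, c₀ := by
          rw [Finset.sum_const, Finset.card_range, nsmul_eq_mul]
    _ ≤ ∑ i ∈ Finset.range n, ν j (U i ∩ O) :=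
        Finset.sum_le_sum fun i hi => hboundi i (Finset.mem_range.mp hi)
    _ = ν j (⋃ i ∈ Finset.range n, (U i ∩ O)) :=
        (measure_biUnion_finset hdisjU fun i _ =>
          (((hUo i).inter isOpen_interior)).measurableSet).symm
    _ ≤ ν j O := measure_mono (Set.iUnion₂_subset fun i _ => inter_subset_right)
  exact absurd hn' (not_lt.mpr hsum)

end Main


end BLaux

/-- **Finiteness of the Brascamp–Lieb constant forces properness and openness.**
If `(G, σ, p)` is a Brascamp–Lieb datum of locally compact Hausdorff groups with
`BL(G, σ, p) < ∞`, then the joint homomorphism `(σ_1, …, σ_J) : G → ∏ j, Gj j` is proper, and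
for each `j` either `σ j` is an open map or `p j = ∞`. -/
theorem proper_and_open_of_BLConst_lt_top
    {J : Type*} [Fintype J]
    {G : Type*} [Group G] [TopologicalSpace G] [IsTopologicalGroup G] [LocallyCompactSpace G]
    [T2Space G] [MeasurableSpace G] [BorelSpace G]
    (μ : Measure G) [μ.IsHaarMeasure]
    {Gj : J → Type*} [∀ j, Group (Gj j)] [∀ j, TopologicalSpace (Gj j)]
    [∀ j, IsTopologicalGroup (Gj j)] [∀ j, LocallyCompactSpace (Gj j)] [∀ j, T2Space (Gj j)]
    [∀ j, MeasurableSpace (Gj j)] [∀ j, BorelSpace (Gj j)]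
    (ν : ∀ j, Measure (Gj j)) [∀ j, (ν j).IsHaarMeasure]
    (σ : ∀ j, G →* Gj j) (hσ : ∀ j, Continuous (σ j))
    (p : J → ℝ≥0∞) (hp : ∀ j, 1 ≤ p j)
    (hBL : BLConst μ ν (fun j => ⇑(σ j)) p < ∞) :
    (∀ K : Set (∀ j, Gj j), IsCompact K → IsCompact (Pi.monoidHom σ ⁻¹' K)) ∧
      ∀ j, IsOpenMap (σ j) ∨ p j = ∞ := by
  classical
  rw [BLConst] at hBL
  obtain ⟨C, hCmem, hClt⟩ := sInf_lt_iff.mp hBL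
  simp only [Set.mem_setOf_eq] at hCmem
  refine ⟨fun K hK => BLaux_proper μ ν σ p hσ hClt (fun f a b c => hCmem f a b c) K hK,
    fun j => ?_⟩
  by_cases hpj : p j = ∞
  · exact Or.inr hpj
  · exact Or.inl (BLaux_open μ ν σ p hσ hp hClt (fun f a b c => hCmem f a b c) j hpj)


end
end

section
/- Let (G, σ, p) be a Brascamp–Lieb datum. If ⋂_{j=1}^J ker σ_j is not a compact subgroup of G, then BL(G, σ, p) = ∞. -/
open MeasureTheory ENNReal

noncomputable section

open Set Pointwise

theorem aux_measure_top
    {G : Type*} [Group G] [TopologicalSpace G] [IsTopologicalGroup G] [LocallyCompactSpace G]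
    [T2Space G] [MeasurableSpace G] [BorelSpace G]
    (μ : Measure G) [μ.IsHaarMeasure]
    (H : Subgroup G) (hHc : IsClosed (H : Set G)) (hker : ¬ IsCompact (H : Set G))
    (U : Set G) (hU : IsOpen U) (h1U : (1:G) ∈ U) :
    ∃ T : Set G, MeasurableSet T ∧ T ⊆ (H : Set G) * U ∧ μ T = ∞ := by
  haveI := Classical.decEq G
  obtain ⟨K, hKcomp, h1K, hKU'⟩ := exists_compact_subset hU h1U
  have hKμ : μ K ≠ 0 := by
    have : μ (interior K) ≠ 0 :=
      ((isOpen_interior.measure_pos μ ⟨1, h1K⟩)).ne'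
    exact fun h => this (le_antisymm (le_trans (measure_mono interior_subset) h.le) zero_le')
  set L : Set G := K * K⁻¹ with hL
  have hLcomp : IsCompact L := hKcomp.mul hKcomp.inv
  have key : ∀ s : Finset G, ∃ x, x ∈ (H : Set G) ∧ ∀ y ∈ s, x ∉ y • L := by
    intro s
    by_contra hcon
    push_neg at hcon
    have hsub : (H : Set G) ⊆ ⋃ y ∈ s, y • L := by
      intro x hx
      obtain ⟨y, hy, hxy⟩ := hcon x hx
      exact mem_biUnion hy hxy
    have hcomp : IsCompact (⋃ y ∈ s, y • L) :=
      s.finite_toSet.isCompact_biUnion (fun y _ => hLcomp.smul y)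
    exact hker (hcomp.of_isClosed_subset hHc hsub)
  -- build the sequence
  let F : ℕ → G × Finset G := fun n => Nat.rec
    (let x := Classical.choose (key ∅); (x, {x}))
    (fun _ p => let x := Classical.choose (key p.2); (x, insert x p.2)) n
  set h : ℕ → G := fun n => (F n).1 with hh
  have hFsucc : ∀ n, F (n+1) = (Classical.choose (key (F n).2),
      insert (Classical.choose (key (F n).2)) (F n).2) := fun n => rfl
  have hspecH : ∀ n, h n ∈ (H : Set G) := by
    intro n; cases n with
    | zero => exact (Classical.choose_spec (key ∅)).1
    | succ k => exact (Classical.choose_spec (key (F k).2)).1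
  have hspec2 : ∀ k, ∀ y ∈ (F k).2, h (k+1) ∉ y • L :=
    fun k => (Classical.choose_spec (key (F k).2)).2
  have hmemset : ∀ n, h n ∈ (F n).2 := by
    intro n; cases n with
    | zero => exact Finset.mem_singleton_self _
    | succ k => rw [hFsucc k]; exact Finset.mem_insert_self _ _
  have hmono : ∀ m n, m ≤ n → (F m).2 ⊆ (F n).2 := by
    intro m n hmn
    induction n with
    | zero => simp_all
    | succ k ih =>
      rcases Nat.lt_or_ge m (k+1) with hlt | hge
      · intro x hx
        rw [hFsucc k]
        exact Finset.mem_insert_of_mem (ih (Nat.lt_succ_iff.mp hlt) hx)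
      · have : m = k + 1 := le_antisymm hmn hge
        subst this; exact fun x hx => hx
  have hnot : ∀ m n, m < n → h n ∉ h m • L := by
    intro m n hmn
    cases n with
    | zero => omega
    | succ k =>
      exact hspec2 k (h m) (hmono m k (Nat.lt_succ_iff.mp hmn) (hmemset m))
  have hdisjlt : ∀ m n, m < n → Disjoint (h m • K) (h n • K) := by
    intro m n hlt
    rw [Set.disjoint_left]
    rintro x ⟨a, ha, rfl⟩ ⟨b, hb, hab⟩
    refine hnot m n hlt ?_
    have hx : h n = h m * (a * b⁻¹) := by
      have h1 : h n * b = h m * a := by simpa [smul_eq_mul] using hab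
      have := congrArg (· * b⁻¹) h1
      simpa [mul_assoc] using this
    rw [hx]
    exact Set.smul_mem_smul_set (Set.mul_mem_mul ha (Set.inv_mem_inv.mpr hb))
  have hdisj : Pairwise (Function.onFun Disjoint (fun n => h n • K)) := by
    intro m n hmn
    rcases lt_or_gt_of_ne hmn with hlt | hgt
    · exact hdisjlt m n hlt
    · exact (hdisjlt n m hgt).symm
  refine ⟨⋃ n, h n • K, ?_, ?_, ?_⟩
  · exact MeasurableSet.iUnion (fun n => (hKcomp.smul (h n)).measurableSet)
  · refine iUnion_subset fun n => ?_
    rintro x ⟨a, ha, rfl⟩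
    exact ⟨h n, hspecH n, a, hKU' ha, rfl⟩
  · rw [measure_iUnion hdisj (fun n => (hKcomp.smul (h n)).measurableSet)]
    simp only [measure_smul]
    exact ENNReal.tsum_const_eq_top_of_ne_zero hKμ


/-- **Noncompact joint kernel forces an infinite Brascamp–Lieb constant.**
If `(G, σ, p)` is a Brascamp–Lieb datum of locally compact Hausdorff groups and the joint
kernel `⋂ j, ker (σ j)` is not compact, then `BL(G, σ, p) = ∞`. -/
theorem BLConst_eq_top_of_not_isCompact_ker
    {J : Type*} [Fintype J]
    {G : Type*} [Group G] [TopologicalSpace G] [IsTopologicalGroup G] [LocallyCompactSpace G]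
    [T2Space G] [MeasurableSpace G] [BorelSpace G]
    (μ : Measure G) [μ.IsHaarMeasure]
    {Gj : J → Type*} [∀ j, Group (Gj j)] [∀ j, TopologicalSpace (Gj j)]
    [∀ j, IsTopologicalGroup (Gj j)] [∀ j, LocallyCompactSpace (Gj j)] [∀ j, T2Space (Gj j)]
    [∀ j, MeasurableSpace (Gj j)] [∀ j, BorelSpace (Gj j)]
    (ν : ∀ j, Measure (Gj j)) [∀ j, (ν j).IsHaarMeasure]
    (σ : ∀ j, G →* Gj j) (hσ : ∀ j, Continuous (σ j))
    (p : J → ℝ≥0∞) (hp : ∀ j, 1 ≤ p j)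
    (hker : ¬ IsCompact ((⨅ j, (σ j).ker : Subgroup G) : Set G)) :
    BLConst μ ν (fun j => ⇑(σ j)) p = ∞ := by
  classical
  set H : Subgroup G := ⨅ j, (σ j).ker with hHdef
  have hHc : IsClosed (H : Set G) := by
    rw [hHdef, Subgroup.coe_iInf]
    refine isClosed_iInter (fun j => ?_)
    have : ((σ j).ker : Set G) = (σ j) ⁻¹' {1} := rfl
    rw [this]
    exact IsClosed.preimage (hσ j) isClosed_singleton
  -- bump functions
  have hbump : ∀ j, ∃ f : (Gj j) → ℝ, Continuous f ∧ HasCompactSupport f ∧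
      (∀ y, 0 ≤ f y) ∧ ∃ V : Set (Gj j), IsOpen V ∧ (1:Gj j) ∈ V ∧ ∀ y ∈ V, f y = 1 := by
    intro j
    obtain ⟨K, hKc, hKn⟩ := exists_compact_mem_nhds (1 : Gj j)
    obtain ⟨f, hf1, -, hfcs, hf01⟩ :=
      exists_continuous_one_zero_of_isCompact hKc isClosed_empty (by simp)
    exact ⟨f, f.continuous, hfcs, fun y => (hf01 y).1, interior K, isOpen_interior,
      mem_interior_iff_mem_nhds.mpr hKn, fun y hy => hf1 (interior_subset hy)⟩
  choose f hfc hfs hf0 V hVopen hV1 hfV using hbump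
  set U : Set G := ⋂ j, (σ j) ⁻¹' (V j) with hUdef
  have hUopen : IsOpen U := isOpen_iInter_of_finite (fun j => (hVopen j).preimage (hσ j))
  have h1U : (1:G) ∈ U := by
    simp only [hUdef, mem_iInter, mem_preimage, map_one]
    exact fun j => hV1 j
  obtain ⟨T, hTm, hTsub, hTμ⟩ := aux_measure_top μ H hHc hker U hUopen h1U
  have hTval : ∀ x ∈ T, (∏ j, ENNReal.ofReal (f j (σ j x))) = 1 := by
    intro x hx
    obtain ⟨h, hh, u, hu, rfl⟩ := hTsub hx
    have : ∀ j, f j (σ j (h * u)) = 1 := by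
      intro j
      have hker' : σ j h = 1 := by
        have : H ≤ (σ j).ker := iInf_le _ j
        exact this hh
      have hu' : σ j u ∈ V j := by
        have := mem_iInter.mp hu j
        exact this
      rw [map_mul, hker', one_mul]
      exact hfV j _ hu'
    show ∏ j, ENNReal.ofReal (f j (σ j (h * u))) = 1
    simp only [this, ENNReal.ofReal_one, Finset.prod_const_one]
  rw [BLConst, sInf_eq_top]
  intro C hC
  by_contra hCne
  have hRHS : (∏ j, eLpNorm (f j) (p j) (ν j)) ≠ ∞ := by
    refine (ENNReal.prod_lt_top (fun j _ => ?_)).ne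
    exact ((hfc j).memLp_of_hasCompactSupport (hfs j)).2
  have hLHS : (∞:ℝ≥0∞) ≤ ∫⁻ x, ∏ j, ENNReal.ofReal (f j (σ j x)) ∂μ := by
    calc (∞:ℝ≥0∞) = μ T := hTμ.symm
    _ = ∫⁻ x, T.indicator (fun _ => (1:ℝ≥0∞)) x ∂μ := by
        rw [lintegral_indicator hTm]; simp
    _ ≤ ∫⁻ x, ∏ j, ENNReal.ofReal (f j (σ j x)) ∂μ := by
        refine lintegral_mono (fun x => ?_)
        by_cases hx : x ∈ T
        · rw [indicator_of_mem hx, hTval x hx]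
        · rw [indicator_of_notMem hx]; exact zero_le'
  have := le_trans hLHS (hC f hfc hfs hf0)
  exact (ENNReal.mul_ne_top hCne hRHS) (top_le_iff.mp this)

end
end

section
/- Let (G, σ, p) be a Brascamp–Lieb datum, let N be a closed normal subgroup of G, and suppose that for each j the image σ_j(N) is a closed normal subgroup of G_j. Equip N and G/N with Haar measures so that the Haar measures on G, N, and G/N satisfy the Weil quotient integral formula, and for each j equip σ_j(N) and G_j/σ_j(N) with Haar measures so that the Haar measures on G_j, σ_j(N), and G_j/σ_j(N) satisfy the Weil quotient integral formula. Let σ|_N denote the family of restricted homomorphisms N → σ_j(N), and let σ̇ denote the family of induced homomorphisms G/N → G_j/σ_j(N). Then BL(G, σ, p) ≤ BL(N, σ|_N, p) · BL(G/N, σ̇, p). -/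
open MeasureTheory ENNReal

noncomputable section

/-- The Weil quotient integral formula for measures `μ` on `G`, `ν` on a subgroup `N`, and
`μq` on the quotient `G ⧸ N`:
`∫_G f = ∫_{G ⧸ N} ∫_N f (x y) dν(y) dμq(xN)` for all continuous compactly supported `f`. -/
def WeilFormula {G : Type*} [Group G] [TopologicalSpace G] [MeasurableSpace G]
    (N : Subgroup G) (μ : Measure G) (ν : Measure N) (μq : Measure (G ⧸ N)) : Prop :=
  ∀ f : G → ℝ, Continuous f → HasCompactSupport f →
    ∫ x, f x ∂μ = ∫ q : G ⧸ N, ∫ y : N, f (Quotient.out q * (y : G)) ∂ν ∂μq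

open Topology Pointwise

set_option maxHeartbeats 2000000

theorem ennreal_le_sInf_mul {S : Set ℝ≥0∞} {x b : ℝ≥0∞} (hb : b ≠ ⊤) (h0 : b = 0 → x = 0)
    (h : ∀ C ∈ S, x ≤ C * b) : x ≤ sInf S * b := by
  rcases eq_or_ne b 0 with rfl | hb0
  · simp [h0 rfl]
  · have h1 : x / b ≤ sInf S := le_sInf fun C hC => (ENNReal.div_le_iff hb0 hb).2 (h C hC)
    exact (ENNReal.div_le_iff hb0 hb).1 h1

/-- A continuous function with vanishing `eLpNorm` w.r.t. an open-positive measure vanishes. -/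
theorem cont_eq_zero_of_eLpNorm_eq_zero {X : Type*} [TopologicalSpace X] [MeasurableSpace X]
    [OpensMeasurableSpace X] (ρ : Measure X) [ρ.IsOpenPosMeasure] {f : X → ℝ}
    (hf : Continuous f) {q : ℝ≥0∞} (hq : q ≠ 0) (h : eLpNorm f q ρ = 0) : ∀ x, f x = 0 := by
  have h1 : f =ᶠ[ae ρ] 0 := (eLpNorm_eq_zero_iff hf.aestronglyMeasurable hq).1 h
  have h2 : f = 0 := (Continuous.ae_eq_iff_eq ρ hf continuous_const).1 h1
  exact fun x => congrFun h2 x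

/-- The pointwise norm of a continuous function is bounded by its essential sup norm
w.r.t. an open-positive measure. -/
theorem enorm_le_eLpNormEssSup_of_continuous {X : Type*} [TopologicalSpace X] [MeasurableSpace X]
    (ρ : Measure X) [ρ.IsOpenPosMeasure] {f : X → ℝ} (hf : Continuous f) (x : X) :
    (‖f x‖₊ : ℝ≥0∞) ≤ eLpNormEssSup f ρ := by
  by_contra hlt
  push_neg at hlt
  have hUopen : IsOpen {y | eLpNormEssSup f ρ < (‖f y‖₊ : ℝ≥0∞)} :=
    isOpen_lt continuous_const (ENNReal.continuous_coe.comp hf.nnnorm)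
  have hzero : ρ {y | eLpNormEssSup f ρ < (‖f y‖₊ : ℝ≥0∞)} = 0 := by
    have := ae_le_eLpNormEssSup (f := f) (μ := ρ)
    rw [Filter.eventually_iff, mem_ae_iff] at this
    convert this using 2
    ext y
    simp [not_le]
    rfl
  exact hUopen.measure_ne_zero ρ ⟨x, hlt⟩ hzero


theorem lintegral_le_of_forall_cc {X : Type*} [TopologicalSpace X] [RegularSpace X] [T2Space X]
    [LocallyCompactSpace X] [MeasurableSpace X] [BorelSpace X] (ρ : Measure X) [ρ.Regular]
    {F : X → ℝ} (hF : Continuous F) (hF0 : ∀ x, 0 ≤ F x) {T : ℝ≥0∞}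
    (hT : ∀ g : X → ℝ, Continuous g → HasCompactSupport g → (∀ x, 0 ≤ g x) → (∀ x, g x ≤ F x) →
      ∫⁻ x, ENNReal.ofReal (g x) ∂ρ ≤ T) :
    ∫⁻ x, ENNReal.ofReal (F x) ∂ρ ≤ T := by
  have hFm : Measurable fun x => ENNReal.ofReal (F x) :=
    ENNReal.measurable_ofReal.comp hF.measurable
  rw [lintegral_eq_iSup_eapprox_lintegral hFm]
  refine iSup_le fun n => ?_
  have hle : ∀ a, (SimpleFunc.eapprox (fun x => ENNReal.ofReal (F x)) n) a
      ≤ ENNReal.ofReal (F a) := fun a => by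
    calc (SimpleFunc.eapprox (fun x => ENNReal.ofReal (F x)) n) a
        ≤ ⨆ m, (SimpleFunc.eapprox (fun x => ENNReal.ofReal (F x)) m) a :=
          le_iSup (fun m => (SimpleFunc.eapprox (fun x => ENNReal.ofReal (F x)) m) a) n
      _ = ENNReal.ofReal (F a) := SimpleFunc.iSup_eapprox_apply hFm a
  generalize SimpleFunc.eapprox (fun x => ENNReal.ofReal (F x)) n = φ at hle
  by_cases hinf : ∃ c ∈ φ.range, c ≠ 0 ∧ ρ (⇑φ ⁻¹' {c}) = ∞
  · -- an infinite fiber: `T = ∞`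
    obtain ⟨c, _hcr, hc0, hcinf⟩ := hinf
    obtain ⟨r, hr0, hrc⟩ := ENNReal.lt_iff_exists_nnreal_btwn.1 hc0.bot_lt
    have hrne : r ≠ 0 := by simpa using hr0.ne'
    have hr0' : (0 : ℝ) < (r : ℝ) := NNReal.coe_pos.2 (pos_iff_ne_zero.2 hrne)
    set U := {x | (r : ℝ) < F x} with hU
    have hUopen : IsOpen U := isOpen_lt continuous_const hF
    have hEU : ⇑φ ⁻¹' {c} ⊆ U := by
      intro x hx
      have hxc : φ x = c := hx
      have h1 : (r : ℝ≥0∞) < ENNReal.ofReal (F x) := lt_of_lt_of_le hrc (hxc ▸ hle x)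
      rw [← ENNReal.ofReal_coe_nnreal] at h1
      exact (ENNReal.ofReal_lt_ofReal_iff_of_nonneg r.2).1 h1
    have hUinf : ρ U = ∞ := eq_top_iff.2 (hcinf ▸ measure_mono hEU)
    have key : ∀ K : Set X, K ⊆ U → IsCompact K → (r : ℝ≥0∞) * ρ K ≤ T := by
      intro K hKU hK
      obtain ⟨u, hu1, _hu0, hucs, hur⟩ :=
        exists_continuous_one_zero_of_isCompact hK isClosed_empty (Set.disjoint_empty K)
      set g : X → ℝ := fun x => min (F x) ((r : ℝ) * u x) with hg
      have hb : ∀ x, K.indicator (fun _ => (r : ℝ≥0∞)) x ≤ ENNReal.ofReal (g x) := by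
        intro x
        by_cases hx : x ∈ K
        · rw [Set.indicator_of_mem hx]
          have hux : u x = 1 := by simpa using hu1 hx
          have hFx : (r : ℝ) ≤ F x := (hKU hx).le
          have hgx : g x = (r : ℝ) := by
            show min (F x) ((r : ℝ) * u x) = (r : ℝ)
            rw [hux, mul_one, min_eq_right hFx]
          rw [hgx, ENNReal.ofReal_coe_nnreal]
        · rw [Set.indicator_of_notMem hx]; exact zero_le
      refine le_trans ?_ (hT g (hF.min (continuous_const.mul u.continuous)) ?_ ?_ ?_)
      · calc (r : ℝ≥0∞) * ρ K = ∫⁻ x, K.indicator (fun _ => (r : ℝ≥0∞)) x ∂ρ := by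
              rw [lintegral_indicator hK.isClosed.measurableSet, setLIntegral_const]
          _ ≤ ∫⁻ x, ENNReal.ofReal (g x) ∂ρ := lintegral_mono hb
      · refine HasCompactSupport.mono (hucs.mul_left (f := fun _ => (r : ℝ))) ?_
        intro x hx
        simp only [Function.mem_support] at hx ⊢
        intro h0
        refine hx ?_
        simp only [Pi.mul_apply] at h0
        show min (F x) ((r : ℝ) * u x) = 0
        rw [h0, min_eq_right (hF0 x)]
      · exact fun x => le_min (hF0 x) (mul_nonneg r.2 (hur x).1)
      · exact fun x => min_le_left _ _
    have hfin : (r : ℝ≥0∞) * ρ U ≤ T := by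
      rw [hUopen.measure_eq_iSup_isCompact]
      simp_rw [mul_iSup]
      exact iSup_le fun K => iSup_le fun hKU => iSup_le fun hK => key K hKU hK
    rw [hUinf, ENNReal.mul_top (ENNReal.coe_ne_zero.2 hrne)] at hfin
    exact le_trans le_top (top_le_iff.1 hfin ▸ le_rfl)
  · -- all fibers of nonzero values have finite measure
    push_neg at hinf
    classical
    set s : Finset ℝ≥0∞ := φ.range.filter (fun c => c ≠ 0) with hs
    have hmem_s : ∀ c ∈ s, c ∈ φ.range ∧ c ≠ 0 := fun c hc => Finset.mem_filter.1 hc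
    have hlint : φ.lintegral ρ = ∑ c ∈ s, c * ρ (⇑φ ⁻¹' {c}) :=
      SimpleFunc.lintegral_eq_of_subset (f := φ) fun x hx0 _ =>
        Finset.mem_filter.2 ⟨SimpleFunc.mem_range_self φ x, hx0⟩
    have hctop : ∀ c ∈ s, c ≠ ⊤ := by
      intro c hc
      obtain ⟨hcr, _⟩ := hmem_s c hc
      obtain ⟨x, hx⟩ := SimpleFunc.mem_range.1 hcr
      intro htop
      have := hle x
      rw [hx, htop] at this
      exact (lt_irrefl _ (lt_of_le_of_lt this ENNReal.ofReal_lt_top)).elim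
    have hSc : (∑ c ∈ s, c) ≠ ⊤ := by
      refine (ENNReal.sum_lt_top.2 fun c hc => ?_).ne
      exact lt_top_iff_ne_top.2 (hctop c hc)
    refine ENNReal.le_of_forall_pos_le_add fun ε hε _hTtop => ?_
    set δ : ℝ≥0∞ := (ε : ℝ≥0∞) / (∑ c ∈ s, c + 1) with hδ
    have hδ0 : δ ≠ 0 := by
      rw [hδ]
      refine (ENNReal.div_pos (by exact_mod_cast hε.ne') ?_).ne'
      exact ENNReal.add_ne_top.2 ⟨hSc, ENNReal.one_ne_top⟩
    have hKc : ∀ c ∈ s, ∃ K, K ⊆ ⇑φ ⁻¹' {c} ∧ IsCompact K ∧ ρ (⇑φ ⁻¹' {c}) ≤ ρ K + δ := by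
      intro c hc
      obtain ⟨K, h1, h2, h3⟩ := (φ.measurableSet_fiber c).exists_isCompact_lt_add
        (hinf c (hmem_s c hc).1 (hmem_s c hc).2) hδ0
      exact ⟨K, h1, h2, h3.le⟩
    choose! K hK1 hK2 hK3 using hKc
    have hUry : ∀ c ∈ s, ∃ u : C(X, ℝ), Set.EqOn ⇑u 1 (K c) ∧ HasCompactSupport ⇑u ∧
        ∀ x, u x ∈ Set.Icc (0 : ℝ) 1 := by
      intro c hc
      obtain ⟨u, h1, _h2, h3, h4⟩ := exists_continuous_one_zero_of_isCompact (hK2 c hc)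
        isClosed_empty (Set.disjoint_empty _)
      exact ⟨u, h1, h3, h4⟩
    choose! u hu1 hu2 hu3 using hUry
    set g : X → ℝ := fun x => min (F x) (∑ c ∈ s, c.toReal * u c x) with hg
    have hgc : Continuous g :=
      hF.min (continuous_finset_sum _ fun c _hc => continuous_const.mul (u c).continuous)
    have hgs : HasCompactSupport g := by
      refine HasCompactSupport.intro (K := ⋃ c ∈ s, tsupport ⇑(u c))
        (s.finite_toSet.isCompact_biUnion fun c hc => hu2 c hc) ?_
      intro x hx
      have hzero : ∀ c ∈ s, u c x = 0 := fun c hc =>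
        image_eq_zero_of_notMem_tsupport fun h => hx (Set.mem_biUnion hc h)
      rw [hg]
      simp only
      rw [Finset.sum_congr rfl fun c hc => by rw [hzero c hc, mul_zero], Finset.sum_const_zero]
      exact min_eq_right (hF0 x)
    have hg0 : ∀ x, 0 ≤ g x := fun x => le_min (hF0 x)
      (Finset.sum_nonneg fun c hc => mul_nonneg ENNReal.toReal_nonneg (hu3 c hc x).1)
    have hgF : ∀ x, g x ≤ F x := fun x => min_le_left _ _
    have hpt : ∀ x, (∑ c ∈ s, (K c).indicator (fun _ => c) x) ≤ ENNReal.ofReal (g x) := by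
      intro x
      by_cases hx : ∃ c₀ ∈ s, x ∈ K c₀
      · obtain ⟨c₀, hc₀s, hxK⟩ := hx
        have hφx : φ x = c₀ := hK1 c₀ hc₀s hxK
        have hsum : ∑ c ∈ s, (K c).indicator (fun _ => c) x = c₀ := by
          refine Finset.sum_eq_single_of_mem c₀ hc₀s ?_ |>.trans
            (by rw [Set.indicator_of_mem hxK])
          intro c hc hne
          refine Set.indicator_of_notMem (fun hxc => hne ?_) _
          have : φ x = c := hK1 c hc hxc
          rw [← this, hφx]
        rw [hsum]
        have hc₀top : c₀ ≠ ⊤ := hctop c₀ hc₀s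
        have hFx : c₀.toReal ≤ F x := ENNReal.toReal_le_of_le_ofReal (hF0 x) (hφx ▸ hle x)
        have hsum2 : c₀.toReal ≤ ∑ c ∈ s, c.toReal * u c x := by
          have h1 : c₀.toReal * u c₀ x = c₀.toReal := by rw [hu1 c₀ hc₀s hxK]; simp
          calc c₀.toReal = c₀.toReal * u c₀ x := h1.symm
            _ ≤ ∑ c ∈ s, c.toReal * u c x := Finset.single_le_sum
                (f := fun c => c.toReal * u c x)
                (fun c hc => mul_nonneg ENNReal.toReal_nonneg (hu3 c hc x).1) hc₀s
        have hgx : c₀.toReal ≤ g x := le_min hFx hsum2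
        calc c₀ = ENNReal.ofReal c₀.toReal := (ENNReal.ofReal_toReal hc₀top).symm
          _ ≤ ENNReal.ofReal (g x) := ENNReal.ofReal_le_ofReal hgx
      · push_neg at hx
        rw [Finset.sum_congr rfl fun c hc => Set.indicator_of_notMem (hx c hc) _,
          Finset.sum_const_zero]
        exact zero_le
    calc φ.lintegral ρ = ∑ c ∈ s, c * ρ (⇑φ ⁻¹' {c}) := hlint
      _ ≤ ∑ c ∈ s, (c * ρ (K c) + c * δ) := Finset.sum_le_sum fun c hc => by
            rw [← mul_add]; exact mul_le_mul_right (hK3 c hc) c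
      _ = (∑ c ∈ s, c * ρ (K c)) + (∑ c ∈ s, c) * δ := by
            rw [Finset.sum_add_distrib, Finset.sum_mul]
      _ ≤ T + ε := by
            refine add_le_add ?_ ?_
            · have heq : ∑ c ∈ s, c * ρ (K c)
                  = ∫⁻ x, (∑ c ∈ s, (K c).indicator (fun _ => c) x) ∂ρ := by
                rw [lintegral_finset_sum _ fun c hc =>
                  (measurable_const.indicator (hK2 c hc).isClosed.measurableSet)]
                refine Finset.sum_congr rfl fun c hc => ?_
                rw [lintegral_indicator (hK2 c hc).isClosed.measurableSet, setLIntegral_const]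
              rw [heq]
              exact le_trans (lintegral_mono hpt) (hT g hgc hgs hg0 hgF)
            · calc (∑ c ∈ s, c) * δ ≤ (∑ c ∈ s, c + 1) * δ :=
                    mul_le_mul_left (le_add_of_nonneg_right zero_le_one) δ
                _ = ε := by
                    rw [hδ, ENNReal.mul_div_cancel ?h1 ?h2]
                    case h1 => exact (lt_of_lt_of_le one_pos le_add_self).ne'
                    case h2 => exact ENNReal.add_ne_top.2 ⟨hSc, ENNReal.one_ne_top⟩


section Descend

variable {X : Type*} [Group X] [TopologicalSpace X] [IsTopologicalGroup X] [LocallyCompactSpace X]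
  [T2Space X] [MeasurableSpace X] [BorelSpace X] (M : Subgroup X)

/-- The slice of a compactly supported function over a closed subgroup has compact support. -/
theorem slice_hcs (hM : IsClosed (M : Set X)) {g : X → ℝ} (h'g : HasCompactSupport g) (x : X) :
    HasCompactSupport fun z : M => g (x * ↑z) := by
  have hemb : IsClosedEmbedding (Subtype.val : M → X) := IsClosedEmbedding.subtypeVal hM
  have hKc : IsCompact ((fun y => x⁻¹ * y) '' tsupport g) :=
    h'g.image (continuous_const.mul continuous_id)
  refine HasCompactSupport.intro (hemb.isCompact_preimage hKc) ?_
  intro z hz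
  by_contra h0
  refine hz ?_
  have hmem : x * ↑z ∈ tsupport g := subset_tsupport g h0
  exact ⟨x * ↑z, hmem, by group⟩

/-- Continuity of the fiberwise integral. -/
theorem phi_cont (ω : Measure M) [IsFiniteMeasureOnCompacts ω] (hM : IsClosed (M : Set X))
    {g : X → ℝ} (hg : Continuous g) (h'g : HasCompactSupport g) :
    Continuous fun x : X => ∫ z : M, g (x * ↑z) ∂ω := by
  haveI : BorelSpace M := Subtype.borelSpace (M : Set X)
  have hemb : IsClosedEmbedding (Subtype.val : M → X) := IsClosedEmbedding.subtypeVal hM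
  rw [continuous_iff_continuousAt]
  intro x₀
  obtain ⟨t, t_comp, ht⟩ := exists_compact_mem_nhds x₀
  have hkc : IsCompact (Subtype.val ⁻¹' ((t⁻¹ : Set X) * tsupport g) : Set M) :=
    hemb.isCompact_preimage (t_comp.inv.mul h'g)
  have hA : ContinuousOn (fun x : X => ∫ z : M, g (x * ↑z) ∂ω) t := by
    refine continuousOn_integral_of_compact_support hkc ?_ ?_
    · exact (hg.comp (continuous_fst.mul
        (continuous_subtype_val.comp continuous_snd))).continuousOn
    · intro q z hq hz
      by_contra h0
      refine hz ?_
      have hmem : q * ↑z ∈ tsupport g := subset_tsupport g h0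
      have : (↑z : X) = q⁻¹ * (q * ↑z) := by simp
      show (↑z : X) ∈ t⁻¹ * tsupport g
      rw [this]
      exact Set.mul_mem_mul (Set.inv_mem_inv.2 (by simpa using hq)) hmem
  exact hA.continuousAt ht

/-- The fiberwise integral only depends on the coset. -/
theorem phi_out_mk (ω : Measure M) [ω.IsHaarMeasure] (g : X → ℝ) (b : X) :
    ∫ z : M, g (Quotient.out (QuotientGroup.mk b : X ⧸ M) * ↑z) ∂ω
      = ∫ z : M, g (b * ↑z) ∂ω := by
  haveI : BorelSpace M := Subtype.borelSpace (M : Set X)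
  have hmem : b⁻¹ * Quotient.out (QuotientGroup.mk b : X ⧸ M) ∈ M := by
    rw [← QuotientGroup.eq]
    exact (QuotientGroup.out_eq' (QuotientGroup.mk b : X ⧸ M)).symm
  set n : M := ⟨b⁻¹ * Quotient.out (QuotientGroup.mk b : X ⧸ M), hmem⟩ with hn
  have hout : Quotient.out (QuotientGroup.mk b : X ⧸ M) = b * ↑n := by
    rw [hn]; simp
  rw [hout]
  have := integral_mul_left_eq_self (μ := ω) (fun z : M => g (b * ↑z)) n
  calc ∫ z : M, g (b * ↑n * ↑z) ∂ω = ∫ z : M, g (b * ↑(n * z)) ∂ω := by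
        refine integral_congr_ae (Filter.Eventually.of_forall fun z => ?_)
        congr 1
        simp [hn, mul_assoc]
    _ = ∫ z : M, g (b * ↑z) ∂ω := this

variable [M.Normal]

/-- Continuity of the descended fiberwise integral on the quotient. -/
theorem phiQ_cont (ω : Measure M) [ω.IsHaarMeasure] (hM : IsClosed (M : Set X))
    {g : X → ℝ} (hg : Continuous g) (h'g : HasCompactSupport g) :
    Continuous fun w : X ⧸ M => ∫ z : M, g (Quotient.out w * ↑z) ∂ω := by
  refine ((QuotientGroup.isQuotientMap_mk M).continuous_iff).2 ?_
  have heq : (fun w : X ⧸ M => ∫ z : M, g (Quotient.out w * ↑z) ∂ω) ∘ QuotientGroup.mk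
      = fun x : X => ∫ z : M, g (x * ↑z) ∂ω := funext fun b => phi_out_mk M ω g b
  rw [heq]
  exact phi_cont M ω hM hg h'g

/-- Compact support of the descended fiberwise integral. -/
theorem phiQ_hcs (ω : Measure M) [ω.IsHaarMeasure] (hM : IsClosed (M : Set X))
    {g : X → ℝ} (h'g : HasCompactSupport g) :
    HasCompactSupport fun w : X ⧸ M => ∫ z : M, g (Quotient.out w * ↑z) ∂ω := by
  haveI : T3Space (X ⧸ M) := @QuotientGroup.instT3Space _ _ _ _ M _ hM
  refine HasCompactSupport.intro (h'g.image QuotientGroup.continuous_mk) ?_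
  intro w hw
  have hzero : ∀ z : M, g (Quotient.out w * ↑z) = 0 := by
    intro z
    by_contra h0
    refine hw ?_
    refine ⟨Quotient.out w * ↑z, subset_tsupport g h0, ?_⟩
    rw [QuotientGroup.mk_mul_of_mem (Quotient.out w) z.2]
    exact QuotientGroup.out_eq' w
  rw [funext hzero]
  exact integral_zero _ _

end Descend

/-- Borel-measurability of open sets in the quotient. -/
theorem opensMeasurableSpace_quotientGroup {X : Type*} [Group X] [TopologicalSpace X]
    [MeasurableSpace X] [OpensMeasurableSpace X] (M : Subgroup X) :
    OpensMeasurableSpace (X ⧸ M) := by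
  refine ⟨?_⟩
  show MeasurableSpace.generateFrom {s : Set (X ⧸ M) | IsOpen s} ≤ _
  refine MeasurableSpace.generateFrom_le fun U hU => ?_
  rw [measurableSet_quotient]
  exact (IsOpen.preimage (QuotientGroup.continuous_mk) hU).measurableSet

/-- **Splitting the Brascamp–Lieb constant along a closed normal subgroup.**
Let `(G, σ, p)` be a Brascamp–Lieb datum of locally compact Hausdorff groups, `N` a closed
normal subgroup of `G` with each `σ j '' N` a closed normal subgroup of `Gj j`. If all the
Haar measures involved are normalised so that the Weil quotient integral formula holds for
`(G, N, G ⧸ N)` and for each `(Gj j, σ j '' N, Gj j ⧸ σ j '' N)`, then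
`BL(G, σ, p) ≤ BL(N, σ|_N, p) * BL(G ⧸ N, σ̇, p)`. -/
theorem BLConst_le_mul_of_quotient
    {J : Type*} [Fintype J]
    {G : Type*} [Group G] [TopologicalSpace G] [IsTopologicalGroup G] [LocallyCompactSpace G]
    [T2Space G] [MeasurableSpace G] [BorelSpace G]
    (μ : Measure G) [μ.IsHaarMeasure]
    {Gj : J → Type*} [∀ j, Group (Gj j)] [∀ j, TopologicalSpace (Gj j)]
    [∀ j, IsTopologicalGroup (Gj j)] [∀ j, LocallyCompactSpace (Gj j)] [∀ j, T2Space (Gj j)]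
    [∀ j, MeasurableSpace (Gj j)] [∀ j, BorelSpace (Gj j)]
    (ν : ∀ j, Measure (Gj j)) [∀ j, (ν j).IsHaarMeasure]
    (σ : ∀ j, G →* Gj j) (hσ : ∀ j, Continuous (σ j))
    (p : J → ℝ≥0∞) (hp : ∀ j, 1 ≤ p j)
    (N : Subgroup G) [N.Normal] (hNclosed : IsClosed (N : Set G))
    [∀ j, (N.map (σ j)).Normal] (hNjclosed : ∀ j, IsClosed ((N.map (σ j)) : Set (Gj j)))
    (νN : Measure N) [νN.IsHaarMeasure]
    (μQ : Measure (G ⧸ N)) [μQ.IsHaarMeasure]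
    (hWeil : WeilFormula N μ νN μQ)
    (νNj : ∀ j, Measure (N.map (σ j))) [∀ j, (νNj j).IsHaarMeasure]
    (νQj : ∀ j, Measure (Gj j ⧸ N.map (σ j))) [∀ j, (νQj j).IsHaarMeasure]
    (hWeilj : ∀ j, WeilFormula (N.map (σ j)) (ν j) (νNj j) (νQj j)) :
    BLConst μ ν (fun j => ⇑(σ j)) p ≤
      BLConst νN νNj (fun j => ⇑((σ j).subgroupMap N)) p *
        BLConst μQ νQj
          (fun j => ⇑(QuotientGroup.map N (N.map (σ j)) (σ j) (Subgroup.le_comap_map (f := σ j) N))) p := by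
  classical
  -- instances
  haveI : BorelSpace (↥N) := Subtype.borelSpace (N : Set G)
  haveI : ∀ j, BorelSpace ↥(N.map (σ j)) := fun j => Subtype.borelSpace _
  haveI : T3Space (G ⧸ N) := @QuotientGroup.instT3Space _ _ _ _ N _ hNclosed
  haveI : ∀ j, T3Space (Gj j ⧸ N.map (σ j)) :=
    fun j => @QuotientGroup.instT3Space _ _ _ _ _ _ (hNjclosed j)
  haveI : OpensMeasurableSpace (G ⧸ N) := opensMeasurableSpace_quotientGroup N
  haveI : ∀ j, OpensMeasurableSpace (Gj j ⧸ N.map (σ j)) :=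
    fun j => opensMeasurableSpace_quotientGroup _
  have hp0 : ∀ j, p j ≠ 0 := fun j => (zero_lt_one.trans_le (hp j)).ne'
  -- the main argument, assuming regularity of the Haar measure upstairs
  have MAIN : ∀ μ' : Measure G, μ'.IsHaarMeasure → μ'.Regular → WeilFormula N μ' νN μQ →
      BLConst μ' ν (fun j => ⇑(σ j)) p ≤
        BLConst νN νNj (fun j => ⇑((σ j).subgroupMap N)) p *
          BLConst μQ νQj
            (fun j => ⇑(QuotientGroup.map N (N.map (σ j)) (σ j)
              (Subgroup.le_comap_map (f := σ j) N))) p := by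
    intro μ' hμ'1 hμ'2 hW
    haveI := hμ'1
    haveI := hμ'2
    set σQ : ∀ j, G ⧸ N → Gj j ⧸ N.map (σ j) :=
      fun j => ⇑(QuotientGroup.map N (N.map (σ j)) (σ j) (Subgroup.le_comap_map (f := σ j) N))
      with hσQ
    have σQ_mk : ∀ j (x : G), σQ j (QuotientGroup.mk x) = QuotientGroup.mk (σ j x) :=
      fun j x => QuotientGroup.map_mk _ _ _ _ x
    refine sInf_le ?_
    intro f hfc hfcs hf0
    -- construct the quotient test functions
    have hexists : ∀ j, ∃ h : Gj j ⧸ N.map (σ j) → ℝ,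
        Continuous h ∧ HasCompactSupport h ∧ (∀ w, 0 ≤ h w) ∧
        (∀ b : Gj j, eLpNorm (fun z : ↥(N.map (σ j)) => f j (b * ↑z)) (p j) (νNj j)
          ≤ ENNReal.ofReal (h (QuotientGroup.mk b))) ∧
        eLpNorm h (p j) (νQj j) ≤ eLpNorm (f j) (p j) (ν j) := by
      intro j
      by_cases hptop : p j = ⊤
      · -- `p j = ∞`
        have h'flt : eLpNormEssSup (f j) (ν j) ≠ ⊤ := by
          have := ((hfc j).memLp_of_hasCompactSupport (hfcs j) (p := ⊤)
            (μ := ν j)).eLpNorm_lt_top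
          rwa [eLpNorm_exponent_top, lt_top_iff_ne_top] at this
        set Mr : ℝ := (eLpNormEssSup (f j) (ν j)).toReal with hMr
        have hMr0 : 0 ≤ Mr := ENNReal.toReal_nonneg
        have hfbd : ∀ y : Gj j, f j y ≤ Mr := by
          intro y
          have h1 := enorm_le_eLpNormEssSup_of_continuous (ν j) (hfc j) y
          have h2 := ENNReal.toReal_mono h'flt h1
          rw [ENNReal.coe_toReal, coe_nnnorm, Real.norm_eq_abs] at h2
          exact (le_abs_self _).trans h2
        obtain ⟨u, hu1, _hu2, hu3, hu4⟩ := exists_continuous_one_zero_of_isCompact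
          (X := Gj j ⧸ N.map (σ j)) ((hfcs j).image QuotientGroup.continuous_mk)
          isClosed_empty (Set.disjoint_empty _)
        refine ⟨fun w => Mr * u w, continuous_const.mul u.continuous, hu3.mul_left,
          fun w => mul_nonneg hMr0 (hu4 w).1, ?_, ?_⟩
        · intro b
          show _ ≤ ENNReal.ofReal (Mr * u (QuotientGroup.mk b))
          by_cases hb : (QuotientGroup.mk b : Gj j ⧸ N.map (σ j))
              ∈ QuotientGroup.mk '' tsupport (f j)
          · have hub : u (QuotientGroup.mk b) = 1 := by simpa using hu1 hb
            rw [hub, mul_one, hptop, eLpNorm_exponent_top]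
            refine eLpNormEssSup_le_of_ae_bound (C := Mr) (Filter.Eventually.of_forall ?_)
            intro z
            rw [Real.norm_eq_abs, abs_of_nonneg (hf0 j _)]
            exact hfbd _
          · have hz : ∀ z : ↥(N.map (σ j)), f j (b * ↑z) = 0 := by
              intro z
              by_contra h0
              refine hb ⟨b * ↑z, subset_tsupport _ h0, ?_⟩
              rw [QuotientGroup.mk_mul_of_mem b z.2]
            have : (fun z : ↥(N.map (σ j)) => f j (b * ↑z)) = fun _ => (0 : ℝ) := funext hz
            rw [this]
            simp [eLpNorm_zero']
        · rw [hptop, eLpNorm_exponent_top]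
          refine le_trans (eLpNormEssSup_le_of_ae_bound (C := Mr)
            (Filter.Eventually.of_forall ?_)) ?_
          · intro w
            rw [Real.norm_eq_abs, abs_mul, abs_of_nonneg hMr0, abs_of_nonneg (hu4 w).1]
            exact mul_le_of_le_one_right hMr0 (hu4 w).2
          · rw [hMr, ENNReal.ofReal_toReal h'flt, eLpNorm_exponent_top]
      · -- `p j` finite
        have hpr1 : 1 ≤ (p j).toReal := by
          have := ENNReal.toReal_mono hptop (hp j)
          simpa using this
        have hprpos : 0 < (p j).toReal := lt_of_lt_of_le one_pos hpr1
        set pr : ℝ := (p j).toReal with hprdef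
        set Fj : Gj j → ℝ := fun x => (f j x) ^ pr with hFjdef
        have hFjc : Continuous Fj := (hfc j).rpow_const fun x => Or.inr hprpos.le
        have hFj0 : ∀ x, 0 ≤ Fj x := fun x => Real.rpow_nonneg (hf0 j x) _
        have hFjs : HasCompactSupport Fj := by
          refine (hfcs j).mono fun x hx => ?_
          simp only [Function.mem_support] at hx ⊢
          intro h0
          refine hx ?_
          rw [hFjdef]
          show (f j x) ^ pr = 0
          rw [h0, Real.zero_rpow hprpos.ne']
        set Φ : Gj j → ℝ := fun b => ∫ z : ↥(N.map (σ j)), Fj (b * ↑z) ∂(νNj j) with hΦdef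
        have hΦ0 : ∀ b, 0 ≤ Φ b := fun b => integral_nonneg fun z => hFj0 _
        have hslice_int : ∀ b : Gj j,
            Integrable (fun z : ↥(N.map (σ j)) => Fj (b * ↑z)) (νNj j) := fun b =>
          (hFjc.comp (continuous_const.mul continuous_subtype_val)).integrable_of_hasCompactSupport
            (slice_hcs _ (hNjclosed j) hFjs b)
        have key : ∀ b : Gj j, eLpNorm (fun z : ↥(N.map (σ j)) => f j (b * ↑z)) (p j) (νNj j)
            = ENNReal.ofReal ((Φ b) ^ pr⁻¹) := by
          intro b
          rw [eLpNorm_eq_lintegral_rpow_enorm_toReal (hp0 j) hptop]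
          have h1 : ∀ z : ↥(N.map (σ j)),
              ‖f j (b * ↑z)‖ₑ ^ pr = ENNReal.ofReal (Fj (b * ↑z)) := by
            intro z
            rw [Real.enorm_eq_ofReal (hf0 j _), ENNReal.ofReal_rpow_of_nonneg (hf0 j _) hprpos.le]
          rw [show (∫⁻ z : ↥(N.map (σ j)), ‖f j (b * ↑z)‖ₑ ^ (p j).toReal ∂(νNj j))
              = ∫⁻ z : ↥(N.map (σ j)), ENNReal.ofReal (Fj (b * ↑z)) ∂(νNj j)
            from lintegral_congr fun z => h1 z]
          rw [← ofReal_integral_eq_lintegral_ofReal (hslice_int b)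
            (Filter.Eventually.of_forall fun z => hFj0 _)]
          rw [one_div, ENNReal.ofReal_rpow_of_nonneg (hΦ0 b) (inv_nonneg.2 hprpos.le)]
        have hout : ∀ b : Gj j,
            Φ (Quotient.out (QuotientGroup.mk b : Gj j ⧸ N.map (σ j))) = Φ b :=
          fun b => phi_out_mk _ (νNj j) Fj b
        have hΦQc : Continuous fun w : Gj j ⧸ N.map (σ j) => Φ (Quotient.out w) :=
          phiQ_cont _ (νNj j) (hNjclosed j) hFjc hFjs
        have hΦQs : HasCompactSupport fun w : Gj j ⧸ N.map (σ j) => Φ (Quotient.out w) :=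
          phiQ_hcs _ (νNj j) (hNjclosed j) hFjs
        refine ⟨fun w => (Φ (Quotient.out w)) ^ pr⁻¹,
          hΦQc.rpow_const fun w => Or.inr (inv_nonneg.2 hprpos.le), ?_, ?_, ?_, ?_⟩
        · refine hΦQs.mono fun w hw => ?_
          simp only [Function.mem_support] at hw ⊢
          intro h0
          refine hw ?_
          show (Φ (Quotient.out w)) ^ pr⁻¹ = 0
          rw [h0, Real.zero_rpow (inv_ne_zero hprpos.ne')]
        · exact fun w => Real.rpow_nonneg (hΦ0 _) _
        · intro b
          show _ ≤ ENNReal.ofReal ((Φ (Quotient.out (QuotientGroup.mk b))) ^ pr⁻¹)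
          rw [hout b]
          exact (key b).le
        · -- the eLpNorm over the quotient equals the original one
          have e1 : eLpNorm (fun w : Gj j ⧸ N.map (σ j) => (Φ (Quotient.out w)) ^ pr⁻¹)
              (p j) (νQj j)
              = (∫⁻ w, ENNReal.ofReal (Φ (Quotient.out w)) ∂(νQj j)) ^ (1 / pr) := by
            rw [eLpNorm_eq_lintegral_rpow_enorm_toReal (hp0 j) hptop]
            congr 1
            refine lintegral_congr fun w => ?_
            rw [Real.enorm_eq_ofReal (Real.rpow_nonneg (hΦ0 _) _),
              ENNReal.ofReal_rpow_of_nonneg (Real.rpow_nonneg (hΦ0 _) _) hprpos.le,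
              Real.rpow_inv_rpow (hΦ0 _) hprpos.ne']
          have e2 : eLpNorm (f j) (p j) (ν j)
              = (ENNReal.ofReal (∫ x, Fj x ∂(ν j))) ^ (1 / pr) := by
            rw [eLpNorm_eq_lintegral_rpow_enorm_toReal (hp0 j) hptop]
            congr 1
            rw [show (∫⁻ x, ‖f j x‖ₑ ^ (p j).toReal ∂(ν j))
                = ∫⁻ x, ENNReal.ofReal (Fj x) ∂(ν j) from lintegral_congr fun x => by
              rw [Real.enorm_eq_ofReal (hf0 j _),
                ENNReal.ofReal_rpow_of_nonneg (hf0 j _) hprpos.le]]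
            rw [← ofReal_integral_eq_lintegral_ofReal
              (hFjc.integrable_of_hasCompactSupport hFjs)
              (Filter.Eventually.of_forall fun x => hFj0 _)]
          rw [e1, e2]
          rw [show (∫ x, Fj x ∂(ν j))
              = ∫ w, Φ (Quotient.out w) ∂(νQj j) from hWeilj j Fj hFjc hFjs]
          rw [ofReal_integral_eq_lintegral_ofReal
            (hΦQc.integrable_of_hasCompactSupport hΦQs)
            (Filter.Eventually.of_forall fun w => hΦ0 _)]
    choose h hh1 hh2 hh3 hh4 hh5 using hexists
    -- the inner inequality
    have inner : ∀ q : G ⧸ N,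
        ∫⁻ y : ↥N, ∏ j, ENNReal.ofReal (f j (σ j (Quotient.out q * ↑y))) ∂νN
          ≤ BLConst νN νNj (fun j => ⇑((σ j).subgroupMap N)) p
            * ∏ j, ENNReal.ofReal (h j (σQ j q)) := by
      intro q
      set gfam : ∀ j, ↥(N.map (σ j)) → ℝ :=
        fun j z => f j (σ j (Quotient.out q) * ↑z) with hgfam
      have step1 : ∫⁻ y : ↥N, ∏ j, ENNReal.ofReal (f j (σ j (Quotient.out q * ↑y))) ∂νN
          = ∫⁻ y : ↥N, ∏ j, ENNReal.ofReal (gfam j (((σ j).subgroupMap N) y)) ∂νN := by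
        refine lintegral_congr fun y => Finset.prod_congr rfl fun j _ => ?_
        rw [hgfam]
        show ENNReal.ofReal (f j (σ j (Quotient.out q * ↑y)))
          = ENNReal.ofReal (f j (σ j (Quotient.out q) * ↑(((σ j).subgroupMap N) y)))
        rw [map_mul]
        rfl
      rw [step1]
      have hgc : ∀ j, Continuous (gfam j) :=
        fun j => (hfc j).comp (continuous_const.mul continuous_subtype_val)
      have hgs : ∀ j, HasCompactSupport (gfam j) :=
        fun j => slice_hcs _ (hNjclosed j) (hfcs j) _
      have hg0 : ∀ j, ∀ z, 0 ≤ gfam j z := fun j z => hf0 j _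
      have mainA : ∫⁻ y : ↥N, ∏ j, ENNReal.ofReal (gfam j (((σ j).subgroupMap N) y)) ∂νN
          ≤ BLConst νN νNj (fun j => ⇑((σ j).subgroupMap N)) p
            * ∏ j, eLpNorm (gfam j) (p j) (νNj j) := by
        unfold BLConst
        refine ennreal_le_sInf_mul ?_ ?_ ?_
        · refine (ENNReal.prod_lt_top fun j _ => ?_).ne
          exact ((hgc j).memLp_of_hasCompactSupport (hgs j)).eLpNorm_lt_top
        · intro hb0
          obtain ⟨j0, _, hj0⟩ := Finset.prod_eq_zero_iff.1 hb0
          have hz := cont_eq_zero_of_eLpNorm_eq_zero (νNj j0) (hgc j0) (hp0 j0) hj0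
          have hzz : ∀ y : ↥N,
              ∏ j, ENNReal.ofReal (gfam j (((σ j).subgroupMap N) y)) = 0 := by
            intro y
            refine Finset.prod_eq_zero (Finset.mem_univ j0) ?_
            rw [hz (((σ j0).subgroupMap N) y), ENNReal.ofReal_zero]
          rw [lintegral_congr hzz, lintegral_zero]
        · intro C hC
          exact hC gfam hgc hgs hg0
      refine mainA.trans (mul_le_mul_right (Finset.prod_le_prod' fun j _ => ?_) _)
      have hσQq : σQ j q = QuotientGroup.mk (σ j (Quotient.out q)) := by
        conv_lhs => rw [← QuotientGroup.out_eq' q]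
        exact σQ_mk j (Quotient.out q)
      rw [hσQq]
      exact hh4 j (σ j (Quotient.out q))
    -- the bridging step through the Weil formula
    have bridge : ∫⁻ x, ∏ j, ENNReal.ofReal (f j (σ j x)) ∂μ'
        ≤ ∫⁻ q, ∫⁻ y : ↥N, ∏ j, ENNReal.ofReal (f j (σ j (Quotient.out q * ↑y))) ∂νN ∂μQ := by
      have hFc : Continuous fun x : G => ∏ j, f j (σ j x) :=
        continuous_finset_prod _ fun j _ => (hfc j).comp (hσ j)
      have hF0 : ∀ x : G, 0 ≤ ∏ j, f j (σ j x) :=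
        fun x => Finset.prod_nonneg fun j _ => hf0 j _
      rw [show (∫⁻ x, ∏ j, ENNReal.ofReal (f j (σ j x)) ∂μ')
          = ∫⁻ x, ENNReal.ofReal (∏ j, f j (σ j x)) ∂μ' from lintegral_congr fun x =>
        (ENNReal.ofReal_prod_of_nonneg fun j _ => hf0 j _).symm]
      refine lintegral_le_of_forall_cc μ' hFc hF0 ?_
      intro g hgc hgcs hg0 hgF
      have hgint : Integrable g μ' := hgc.integrable_of_hasCompactSupport hgcs
      rw [← ofReal_integral_eq_lintegral_ofReal hgint (Filter.Eventually.of_forall hg0),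
        hW g hgc hgcs]
      have hψc : Continuous fun q : G ⧸ N => ∫ y : ↥N, g (Quotient.out q * ↑y) ∂νN :=
        phiQ_cont N νN hNclosed hgc hgcs
      have hψs : HasCompactSupport fun q : G ⧸ N => ∫ y : ↥N, g (Quotient.out q * ↑y) ∂νN :=
        phiQ_hcs N νN hNclosed hgcs
      have hψ0 : ∀ q : G ⧸ N, 0 ≤ ∫ y : ↥N, g (Quotient.out q * ↑y) ∂νN :=
        fun q => integral_nonneg fun y => hg0 _
      rw [ofReal_integral_eq_lintegral_ofReal (hψc.integrable_of_hasCompactSupport hψs)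
        (Filter.Eventually.of_forall hψ0)]
      refine lintegral_mono fun q => ?_
      have hsl : Integrable (fun y : ↥N => g (Quotient.out q * ↑y)) νN :=
        (hgc.comp (continuous_const.mul continuous_subtype_val)).integrable_of_hasCompactSupport
          (slice_hcs N hNclosed hgcs _)
      rw [ofReal_integral_eq_lintegral_ofReal hsl
        (Filter.Eventually.of_forall fun y => hg0 _)]
      refine lintegral_mono fun y => ?_
      calc ENNReal.ofReal (g (Quotient.out q * ↑y))
          ≤ ENNReal.ofReal (∏ j, f j (σ j (Quotient.out q * ↑y))) :=
            ENNReal.ofReal_le_ofReal (hgF _)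
        _ = ∏ j, ENNReal.ofReal (f j (σ j (Quotient.out q * ↑y))) :=
            ENNReal.ofReal_prod_of_nonneg fun j _ => hf0 j _
    -- the outer inequality
    have houter : ∫⁻ q, ∏ j, ENNReal.ofReal (h j (σQ j q)) ∂μQ
        ≤ BLConst μQ νQj σQ p * ∏ j, eLpNorm (h j) (p j) (νQj j) := by
      unfold BLConst
      refine ennreal_le_sInf_mul ?_ ?_ ?_
      · refine (ENNReal.prod_lt_top fun j _ => ?_).ne
        exact ((hh1 j).memLp_of_hasCompactSupport (hh2 j)).eLpNorm_lt_top
      · intro hb0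
        obtain ⟨j0, _, hj0⟩ := Finset.prod_eq_zero_iff.1 hb0
        have hz := cont_eq_zero_of_eLpNorm_eq_zero (νQj j0) (hh1 j0) (hp0 j0) hj0
        have : ∀ q : G ⧸ N, ∏ j, ENNReal.ofReal (h j (σQ j q)) = 0 := by
          intro q
          refine Finset.prod_eq_zero (Finset.mem_univ j0) ?_
          rw [hz _]
          simp
        rw [lintegral_congr this, lintegral_zero]
      · intro C hC
        exact hC h hh1 hh2 hh3
    have hmeas : Measurable fun q : G ⧸ N => ∏ j, ENNReal.ofReal (h j (σQ j q)) := by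
      have σQcont : ∀ j, Continuous (σQ j) := by
        intro j
        refine ((QuotientGroup.isQuotientMap_mk N).continuous_iff).2 ?_
        have : (σQ j) ∘ (QuotientGroup.mk : G → G ⧸ N)
            = (QuotientGroup.mk : Gj j → Gj j ⧸ N.map (σ j)) ∘ (σ j) :=
          funext fun x => σQ_mk j x
        rw [this]
        exact QuotientGroup.continuous_mk.comp (hσ j)
      exact Finset.measurable_prod _ fun j _ =>
        ENNReal.measurable_ofReal.comp ((hh1 j).comp (σQcont j)).measurable
    calc ∫⁻ x, ∏ j, ENNReal.ofReal (f j (σ j x)) ∂μ'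
        ≤ ∫⁻ q, ∫⁻ y : ↥N, ∏ j, ENNReal.ofReal (f j (σ j (Quotient.out q * ↑y))) ∂νN ∂μQ :=
          bridge
      _ ≤ ∫⁻ q, BLConst νN νNj (fun j => ⇑((σ j).subgroupMap N)) p
            * ∏ j, ENNReal.ofReal (h j (σQ j q)) ∂μQ := lintegral_mono inner
      _ = BLConst νN νNj (fun j => ⇑((σ j).subgroupMap N)) p
            * ∫⁻ q, ∏ j, ENNReal.ofReal (h j (σQ j q)) ∂μQ := lintegral_const_mul _ hmeas
      _ ≤ BLConst νN νNj (fun j => ⇑((σ j).subgroupMap N)) p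
            * (BLConst μQ νQj σQ p * ∏ j, eLpNorm (h j) (p j) (νQj j)) :=
          mul_le_mul_right houter _
      _ ≤ BLConst νN νNj (fun j => ⇑((σ j).subgroupMap N)) p
            * (BLConst μQ νQj σQ p * ∏ j, eLpNorm (f j) (p j) (ν j)) :=
          mul_le_mul_right (mul_le_mul_right (Finset.prod_le_prod' fun j _ => hh5 j) _) _
      _ = BLConst νN νNj (fun j => ⇑((σ j).subgroupMap N)) p * BLConst μQ νQj σQ p
            * ∏ j, eLpNorm (f j) (p j) (ν j) := (mul_assoc _ _ _).symm
  -- transfer to a regular Haar measure agreeing with `μ` on compactly supported functions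
  set c : NNReal := Measure.haarScalarFactor μ Measure.haar with hc
  set μ₀ : Measure G := c • Measure.haar with hμ₀
  have hc0 : c ≠ 0 := (Measure.haarScalarFactor_pos_of_isHaarMeasure μ Measure.haar).ne'
  haveI hμ₀H : μ₀.IsHaarMeasure := by
    rw [hμ₀, ENNReal.smul_def]
    exact Measure.IsHaarMeasure.smul _ (by exact_mod_cast hc0) ENNReal.coe_ne_top
  haveI hμ₀R : μ₀.Regular := by
    rw [hμ₀, ENNReal.smul_def]
    exact Measure.Regular.smul ENNReal.coe_ne_top
  have hW₀ : WeilFormula N μ₀ νN μQ := by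
    intro g hgc hgcs
    have h1 : ∫ x, g x ∂μ = ∫ x, g x ∂μ₀ :=
      Measure.integral_isMulLeftInvariant_eq_smul_of_hasCompactSupport μ Measure.haar hgc hgcs
    rw [← h1]
    exact hWeil g hgc hgcs
  have hLHS : BLConst μ ν (fun j => ⇑(σ j)) p = BLConst μ₀ ν (fun j => ⇑(σ j)) p := by
    have hEq : ∀ (f : ∀ j, Gj j → ℝ), (∀ j, Continuous (f j)) → (∀ j, ∀ y, 0 ≤ f j y) →
        ∫⁻ x, ∏ j, ENNReal.ofReal (f j (σ j x)) ∂μ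
          = ∫⁻ x, ∏ j, ENNReal.ofReal (f j (σ j x)) ∂μ₀ := by
      intro f hfc hf0
      have hFc : Continuous fun x : G => ∏ j, f j (σ j x) :=
        continuous_finset_prod _ fun j _ => (hfc j).comp (hσ j)
      have hF0 : ∀ x : G, 0 ≤ ∏ j, f j (σ j x) :=
        fun x => Finset.prod_nonneg fun j _ => hf0 j _
      have hrw : ∀ ρ : Measure G, ∫⁻ x, ∏ j, ENNReal.ofReal (f j (σ j x)) ∂ρ
          = ∫⁻ x, ENNReal.ofReal (∏ j, f j (σ j x)) ∂ρ := fun ρ =>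
        lintegral_congr fun x => (ENNReal.ofReal_prod_of_nonneg fun j _ => hf0 j _).symm
      rw [hrw μ, hrw μ₀,
        lintegral_eq_lintegral_meas_lt μ (Filter.Eventually.of_forall hF0) hFc.aemeasurable,
        lintegral_eq_lintegral_meas_lt μ₀ (Filter.Eventually.of_forall hF0) hFc.aemeasurable]
      refine lintegral_congr fun t => ?_
      have hopen : IsOpen {a : G | t < ∏ j, f j (σ j a)} := isOpen_lt continuous_const hFc
      rw [Measure.measure_isHaarMeasure_eq_smul_of_isOpen μ Measure.haar hopen]
      rw [hμ₀]
      rfl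
    unfold BLConst
    congr 1
    ext C
    constructor
    · intro H f h1 h2 h3
      rw [← hEq f h1 h3]
      exact H f h1 h2 h3
    · intro H f h1 h2 h3
      rw [hEq f h1 h3]
      exact H f h1 h2 h3
  rw [hLHS]
  exact MAIN μ₀ hμ₀H hμ₀R hW₀

end
end

section
/- Let (G, σ, p) be a Brascamp–Lieb datum, let G₀ be an open subgroup of G, and for each j let H_j be an open subgroup of G_j such that σ_j(G₀) ⊆ H_j. Equip G₀ with the restriction to G₀ of the Haar measure of G, and each H_j with the restriction to H_j of the Haar measure of G_j, and let σ°_j : G₀ → H_j be the restriction of σ_j. Then BL(G₀, σ°, p) ≤ BL(G, σ, p). Moreover, if G₀ = G, then BL(G, σ°, p) = BL(G, σ, p); that is, replacing each codomain G_j by an open subgroup H_j containing σ_j(G) does not change the Brascamp–Lieb constant. -/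
open MeasureTheory ENNReal

noncomputable section

lemma lintegral_comap' {α β : Type*} [MeasurableSpace α] [MeasurableSpace β] {g : α → β}
    (hg : MeasurableEmbedding g) (μ : Measure β) (f : β → ℝ≥0∞) :
    ∫⁻ a, f (g a) ∂(μ.comap g) = ∫⁻ b in Set.range g, f b ∂μ := by
  rw [← hg.lintegral_map, hg.map_comap]

lemma eLpNorm_comap' {α β F : Type*} [MeasurableSpace α] [MeasurableSpace β]
    [NormedAddCommGroup F] {g : α → β}
    (hg : MeasurableEmbedding g) (μ : Measure β) (f : β → F) (p : ℝ≥0∞) :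
    eLpNorm (f ∘ g) p (μ.comap g) = eLpNorm f p (μ.restrict (Set.range g)) := by
  rw [← hg.map_comap, hg.eLpNorm_map_measure]

/-- **Restriction to open subgroups does not increase the Brascamp–Lieb constant.**
Let `(G, σ, p)` be a Brascamp–Lieb datum of locally compact Hausdorff groups, `G₀` an open
subgroup of `G` and `H j` open subgroups of `Gj j` with `σ j '' G₀ ⊆ H j`; equip `G₀` and the
`H j` with the restrictions (pullbacks along the inclusions) of the ambient Haar measures.
Then `BL(G₀, σ°, p) ≤ BL(G, σ, p)`, with equality when `G₀ = G`. -/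
theorem BLConst_open_subgroup_le
    {J : Type*} [Fintype J]
    {G : Type*} [Group G] [TopologicalSpace G] [IsTopologicalGroup G] [LocallyCompactSpace G]
    [T2Space G] [MeasurableSpace G] [BorelSpace G]
    (μ : Measure G) [μ.IsHaarMeasure]
    {Gj : J → Type*} [∀ j, Group (Gj j)] [∀ j, TopologicalSpace (Gj j)]
    [∀ j, IsTopologicalGroup (Gj j)] [∀ j, LocallyCompactSpace (Gj j)] [∀ j, T2Space (Gj j)]
    [∀ j, MeasurableSpace (Gj j)] [∀ j, BorelSpace (Gj j)]
    (ν : ∀ j, Measure (Gj j)) [∀ j, (ν j).IsHaarMeasure]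
    (σ : ∀ j, G →* Gj j) (hσ : ∀ j, Continuous (σ j))
    (p : J → ℝ≥0∞) (hp : ∀ j, 1 ≤ p j)
    (G₀ : Subgroup G) (hG₀ : IsOpen (G₀ : Set G))
    (H : ∀ j, Subgroup (Gj j)) (hH : ∀ j, IsOpen ((H j : Set (Gj j))))
    (hmaps : ∀ j, Set.MapsTo (σ j) (G₀ : Set G) ((H j : Set (Gj j)))) :
    BLConst (μ.comap Subtype.val) (fun j => (ν j).comap Subtype.val)
        (fun j => fun x : G₀ => (⟨σ j x, hmaps j x.2⟩ : H j)) p ≤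
      BLConst μ ν (fun j => ⇑(σ j)) p ∧
    (G₀ = ⊤ →
      BLConst (μ.comap Subtype.val) (fun j => (ν j).comap Subtype.val)
          (fun j => fun x : G₀ => (⟨σ j x, hmaps j x.2⟩ : H j)) p =
        BLConst μ ν (fun j => ⇑(σ j)) p) := by
  have embG : MeasurableEmbedding (Subtype.val : G₀ → G) :=
    MeasurableEmbedding.subtype_coe hG₀.measurableSet
  have embH : ∀ j, MeasurableEmbedding (Subtype.val : H j → Gj j) :=
    fun j => MeasurableEmbedding.subtype_coe (hH j).measurableSet
  have h1 : BLConst (μ.comap Subtype.val) (fun j => (ν j).comap Subtype.val)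
        (fun j => fun x : G₀ => (⟨σ j x, hmaps j x.2⟩ : H j)) p ≤
      BLConst μ ν (fun j => ⇑(σ j)) p := by
    apply sInf_le_sInf
    intro C hC
    intro f hcont hsupp hnn
    set F : ∀ j, Gj j → ℝ := fun j => Function.extend Subtype.val (f j) 0 with hF
    have hFval : ∀ j (z : H j), F j (z : Gj j) = f j z :=
      fun j z => Subtype.val_injective.extend_apply _ _ _
    have hFcont : ∀ j, Continuous (F j) :=
      fun j => HasCompactSupport.continuous_extend_zero (hH j) (hcont j) (hsupp j)
    have hFsupp : ∀ j, HasCompactSupport (F j) :=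
      fun j => (hsupp j).extend_zero continuous_subtype_val
    have hFnn : ∀ j, ∀ y, 0 ≤ F j y := by
      intro j y
      by_cases hy : ∃ z : H j, (z : Gj j) = y
      · obtain ⟨z, rfl⟩ := hy
        rw [show F j (z : Gj j) = f j z from hFval j z]
        exact hnn j z
      · show 0 ≤ Function.extend Subtype.val (f j) 0 y
        rw [Function.extend_apply' _ _ _ hy]
        simp
    have hFss : ∀ j, Function.support (F j) ⊆ (H j : Set (Gj j)) := by
      intro j
      refine Function.support_extend_zero_subset.trans ?_
      rintro _ ⟨z, -, rfl⟩; exact z.2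
    calc ∫⁻ x, ∏ j, ENNReal.ofReal
            (f j ((fun j => fun x : G₀ => (⟨σ j x, hmaps j x.2⟩ : H j)) j x))
            ∂(μ.comap Subtype.val)
        = ∫⁻ x, (fun y => ∏ j, ENNReal.ofReal (F j (σ j y))) ((Subtype.val : G₀ → G) x)
            ∂(μ.comap Subtype.val) := by
          refine lintegral_congr fun x => Finset.prod_congr rfl fun j _ => ?_
          rw [show σ j (x : G) = ((⟨σ j x, hmaps j x.2⟩ : H j) : Gj j) from rfl, hFval]
      _ = ∫⁻ y in Set.range (Subtype.val : G₀ → G), ∏ j, ENNReal.ofReal (F j (σ j y)) ∂μ := by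
          exact lintegral_comap' embG μ (fun y => ∏ j, ENNReal.ofReal (F j (σ j y)))
      _ ≤ ∫⁻ y, ∏ j, ENNReal.ofReal (F j (σ j y)) ∂μ :=
          lintegral_mono' Measure.restrict_le_self le_rfl
      _ ≤ C * ∏ j, eLpNorm (F j) (p j) (ν j) := hC F hFcont hFsupp hFnn
      _ = C * ∏ j, eLpNorm (f j) (p j) ((ν j).comap Subtype.val) := by
          refine congrArg (C * ·) (Finset.prod_congr rfl fun j _ => ?_)
          have hfF : f j = (F j) ∘ (Subtype.val : H j → Gj j) :=
            funext fun z => (hFval j z).symm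
          rw [hfF, eLpNorm_comap' (embH j), Subtype.range_coe,
            ← eLpNorm_indicator_eq_eLpNorm_restrict (hH j).measurableSet,
            Set.indicator_eq_self.mpr (hFss j)]
  refine ⟨h1, fun hG => ?_⟩
  subst hG
  refine le_antisymm h1 ?_
  apply sInf_le_sInf
  intro C hC
  intro f hcont hsupp hnn
  set g : ∀ j, H j → ℝ := fun j => f j ∘ (Subtype.val : H j → Gj j) with hg
  have hclosed : ∀ j, Topology.IsClosedEmbedding (Subtype.val : H j → Gj j) :=
    fun j => (Subgroup.isClosed_of_isOpen (H j) (hH j)).isClosedEmbedding_subtypeVal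
  have hgcont : ∀ j, Continuous (g j) := fun j => (hcont j).comp continuous_subtype_val
  have hgsupp : ∀ j, HasCompactSupport (g j) :=
    fun j => (hsupp j).comp_isClosedEmbedding (hclosed j)
  have hgnn : ∀ j, ∀ y, 0 ≤ g j y := fun j y => hnn j _
  have key := hC g hgcont hgsupp hgnn
  have hL : ∫⁻ x, ∏ j, ENNReal.ofReal
        (g j ((fun j => fun x : (⊤ : Subgroup G) => (⟨σ j x, hmaps j x.2⟩ : H j)) j x))
        ∂(μ.comap Subtype.val) = ∫⁻ y, ∏ j, ENNReal.ofReal (f j (σ j y)) ∂μ := by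
    calc ∫⁻ x, ∏ j, ENNReal.ofReal
            (g j ((fun j => fun x : (⊤ : Subgroup G) => (⟨σ j x, hmaps j x.2⟩ : H j)) j x))
            ∂(μ.comap Subtype.val)
        = ∫⁻ x, (fun y => ∏ j, ENNReal.ofReal (f j (σ j y)))
            ((Subtype.val : (⊤ : Subgroup G) → G) x) ∂(μ.comap Subtype.val) :=
          lintegral_congr fun x => Finset.prod_congr rfl fun j _ => rfl
      _ = ∫⁻ y in Set.range (Subtype.val : (⊤ : Subgroup G) → G),
            ∏ j, ENNReal.ofReal (f j (σ j y)) ∂μ := by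
            exact lintegral_comap' embG μ (fun y => ∏ j, ENNReal.ofReal (f j (σ j y)))
      _ = ∫⁻ y, ∏ j, ENNReal.ofReal (f j (σ j y)) ∂μ := by
          rw [Subtype.range_coe, Subgroup.coe_top, Measure.restrict_univ]
  rw [hL] at key
  refine key.trans ?_
  refine mul_le_mul' le_rfl (Finset.prod_le_prod' fun j _ => ?_)
  rw [hg]
  rw [eLpNorm_comap' (embH j)]
  exact eLpNorm_mono_measure _ Measure.restrict_le_self

end
end

section
/- Let (G, σ, p) be a Brascamp–Lieb datum and let N be a compact normal subgroup of G such that each σ_j(N) is a compact normal subgroup of G_j. Let σ̇_j : G/N → G_j/σ_j(N) be the induced continuous homomorphisms. Then (σ̇_1, …, σ̇_J) : G/N → ∏_j G_j/σ_j(N) is proper whenever (σ_1, …, σ_J) : G → ∏_j G_j is proper. Moreover, if the Haar measures on N and on each σ_j(N) are probability measures, and the Haar measures on G/N and on each G_j/σ_j(N) are chosen so that the Weil quotient integral formula holds for (G, N, G/N) and for (G_j, σ_j(N), G_j/σ_j(N)), then BL(G/N, σ̇, p) ≤ BL(G, σ, p), with equality if N ⊆ ker σ_j for every j. -/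
open MeasureTheory ENNReal

noncomputable section

open Set Function Filter Topology Pointwise

theorem haar_open_eq {Q : Type*} [Group Q] [TopologicalSpace Q] [IsTopologicalGroup Q]
    [LocallyCompactSpace Q] [T2Space Q] [MeasurableSpace Q] [BorelSpace Q]
    (ρ μB : Measure Q) [ρ.IsHaarMeasure] [μB.IsHaarMeasure]
    (h : ∀ g : Q → ℝ, Continuous g → HasCompactSupport g → ∫ x, g x ∂ρ = ∫ x, g x ∂μB)
    {U : Set Q} (hU : IsOpen U) : ρ U = μB U := by
  obtain ⟨⟨g, g_cont⟩, g_comp, g_nonneg, g_one⟩ :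
    ∃ g : C(Q, ℝ), HasCompactSupport g ∧ 0 ≤ (g : Q → ℝ) ∧ g 1 ≠ 0 :=
    exists_continuous_nonneg_pos 1
  have int_ne : ∫ x, g x ∂μB ≠ 0 :=
    ne_of_gt (g_cont.integral_pos_of_hasCompactSupport_nonneg_nonzero g_comp g_nonneg g_one)
  have hfac : Measure.haarScalarFactor ρ μB = 1 := by
    have := Measure.haarScalarFactor_eq_integral_div ρ μB g_cont g_comp int_ne
    rw [h g g_cont g_comp, div_self int_ne] at this
    exact_mod_cast this
  rw [Measure.measure_isHaarMeasure_eq_smul_of_isOpen ρ μB hU, hfac, one_smul]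

section Aux2

variable {G : Type*} [Group G] [TopologicalSpace G] [IsTopologicalGroup G] [LocallyCompactSpace G]
  [T2Space G] [MeasurableSpace G] [BorelSpace G]

theorem quot_isCompact_preimage (N : Subgroup G) [N.Normal] (hN : IsCompact (N : Set G))
    {K : Set (G ⧸ N)} (hK : IsCompact K) :
    IsCompact ((QuotientGroup.mk : G → G ⧸ N) ⁻¹' K) := by
  haveI : IsClosed (N : Set G) := hN.isClosed
  choose V hVc hVn using fun x : G => exists_compact_mem_nhds x
  have cover : K ⊆ ⋃ x : G, (QuotientGroup.mk : G → G ⧸ N) '' interior (V x) := by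
    intro q hq
    exact mem_iUnion.2 ⟨q.out, ⟨q.out, mem_interior_iff_mem_nhds.2 (hVn q.out), q.out_eq'⟩⟩
  obtain ⟨t, ht⟩ := hK.elim_finite_subcover _
    (fun x => QuotientGroup.isOpenMap_coe _ isOpen_interior) cover
  have hsub : (QuotientGroup.mk : G → G ⧸ N) ⁻¹' K ⊆ (⋃ x ∈ t, V x) * (N : Set G) := by
    intro y hy
    obtain ⟨x, hxt, c, hc, hcy⟩ : ∃ x ∈ t, ∃ c ∈ interior (V x),
        (c : G ⧸ N) = (y : G ⧸ N) := by
      have := ht hy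
      simp only [mem_iUnion, Set.mem_image] at this
      obtain ⟨x, hxt, c, hc, hcy⟩ := this
      exact ⟨x, hxt, c, hc, hcy⟩
    refine ⟨c, mem_biUnion hxt (interior_subset hc), c⁻¹ * y, QuotientGroup.eq.mp hcy, ?_⟩
    group
  have hCc : IsCompact ((⋃ x ∈ t, V x) * (N : Set G)) :=
    (t.isCompact_biUnion (fun x _ => hVc x)).mul hN
  exact IsCompact.of_isClosed_subset hCc
    (hK.isClosed.preimage QuotientGroup.continuous_mk) hsub

instance quotOpensMeasurable (N : Subgroup G) : OpensMeasurableSpace (G ⧸ N) := by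
  refine ⟨MeasurableSpace.generateFrom_le fun U hU => ?_⟩
  rw [measurableSet_quotient]
  exact ((hU.preimage QuotientGroup.continuous_mk)).measurableSet

theorem hasCompactSupport_comp_mk (N : Subgroup G) [N.Normal] (hN : IsCompact (N : Set G))
    {g : G ⧸ N → ℝ} (hgc : HasCompactSupport g) :
    HasCompactSupport (fun x : G => g (QuotientGroup.mk x)) := by
  apply IsCompact.of_isClosed_subset (quot_isCompact_preimage N hN hgc) (isClosed_tsupport _)
  refine closure_minimal (fun x hx => ?_) ((isClosed_tsupport g).preimage QuotientGroup.continuous_mk)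
  exact subset_closure hx

theorem weil_comp_mk (μ : Measure G)
    (N : Subgroup G) [N.Normal] (hN : IsCompact (N : Set G))
    (νN : Measure N) [IsProbabilityMeasure νN]
    (μQ : Measure (G ⧸ N)) (hWeil : WeilFormula N μ νN μQ)
    (g : G ⧸ N → ℝ) (hg : Continuous g) (hgc : HasCompactSupport g) :
    ∫ x, g (QuotientGroup.mk x) ∂μ = ∫ q, g q ∂μQ := by
  have key : ∀ (q : G ⧸ N) (y : N),
      (QuotientGroup.mk (Quotient.out q * (y : G)) : G ⧸ N) = q := by
    intro q y
    rw [QuotientGroup.mk_mul, (QuotientGroup.eq_one_iff (y : G)).2 y.2, mul_one,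
      QuotientGroup.out_eq']
  have := hWeil (fun x => g (QuotientGroup.mk x)) (hg.comp QuotientGroup.continuous_mk) (hasCompactSupport_comp_mk N hN hgc)
  simp only [key, integral_const, measure_univ, probReal_univ, ENNReal.toReal_one, one_smul] at this
  exact this

theorem quot_open_eq (μ : Measure G) [μ.IsHaarMeasure]
    (N : Subgroup G) [N.Normal] (hN : IsCompact (N : Set G))
    (νN : Measure N) [IsProbabilityMeasure νN]
    (μQ : Measure (G ⧸ N)) [μQ.IsHaarMeasure]
    (hWeil : WeilFormula N μ νN μQ)
    {U : Set (G ⧸ N)} (hU : IsOpen U) :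
    μ ((QuotientGroup.mk : G → G ⧸ N) ⁻¹' U) = μQ U := by
  haveI : IsClosed (N : Set G) := hN.isClosed
  have hle : borel (G ⧸ N) ≤ (inferInstance : MeasurableSpace (G ⧸ N)) :=
    (quotOpensMeasurable N).borel_le
  have hprop : Tendsto (QuotientGroup.mk : G → G ⧸ N) (cocompact G) (cocompact (G ⧸ N)) := by
    rw [hasBasis_cocompact.tendsto_iff hasBasis_cocompact]
    exact fun K hK => ⟨_, quot_isCompact_preimage N hN hK, fun x hx => hx⟩
  -- left invariance of μQ at the original quotient σ-algebra, as a set statement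
  have hinv0 : ∀ (g : G ⧸ N) (s : Set (G ⧸ N)), MeasurableSet s →
      μQ ((fun x : G ⧸ N => g * x) ⁻¹' s) = μQ s := by
    intro g s hs
    have hmul0 : Measurable fun x : G ⧸ N => g * x := by
      intro u hu
      rw [measurableSet_quotient]
      have hpre : (QuotientGroup.mk : G → G ⧸ N) ⁻¹' ((fun x : G ⧸ N => g * x) ⁻¹' u)
          = (fun x : G => Quotient.out g * x) ⁻¹' ((QuotientGroup.mk : G → G ⧸ N) ⁻¹' u) := by
        ext x
        simp only [Set.mem_preimage]
        rw [QuotientGroup.mk_mul, QuotientGroup.out_eq']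
      rw [hpre]
      exact measurable_const_mul _ (measurableSet_quotient.1 hu)
    calc μQ ((fun x : G ⧸ N => g * x) ⁻¹' s)
        = Measure.map (fun x : G ⧸ N => g * x) μQ s := (Measure.map_apply hmul0 hs).symm
      _ = μQ s := by rw [MeasureTheory.map_mul_left_eq_self μQ g]
  -- switch to the Borel σ-algebra on the quotient
  letI mb : MeasurableSpace (G ⧸ N) := borel (G ⧸ N)
  haveI hbs : @BorelSpace (G ⧸ N) _ mb := ⟨rfl⟩
  have hπ : Measurable (QuotientGroup.mk : G → G ⧸ N) :=
    QuotientGroup.continuous_mk.measurable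
  haveI hρ : (Measure.map (QuotientGroup.mk : G → G ⧸ N) μ).IsHaarMeasure := by
    have := Measure.isHaarMeasure_map (μ := μ) (QuotientGroup.mk' N)
      QuotientGroup.continuous_mk (QuotientGroup.mk'_surjective N) hprop
    exact this
  haveI hB : (μQ.trim hle).IsHaarMeasure :=
    { lt_top_of_isCompact := fun K hK => by
        rw [trim_measurableSet_eq hle hK.isClosed.measurableSet]
        exact hK.measure_lt_top
      map_mul_left_eq_self := fun g => by
        have hmulb : Measurable fun x : G ⧸ N => g * x :=
          (continuous_const.mul continuous_id).measurable
        refine Measure.ext fun s hs => ?_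
        rw [Measure.map_apply hmulb hs, trim_measurableSet_eq hle (hmulb hs),
          trim_measurableSet_eq hle hs]
        exact hinv0 g s (hle s hs)
      open_pos := fun V hV hVne => by
        rw [trim_measurableSet_eq hle hV.measurableSet]
        exact hV.measure_ne_zero μQ hVne }
  have hint : ∀ g : G ⧸ N → ℝ, Continuous g → HasCompactSupport g →
      ∫ x, g x ∂(Measure.map (QuotientGroup.mk : G → G ⧸ N) μ) = ∫ x, g x ∂(μQ.trim hle) := by
    intro g hg hgc
    rw [integral_map hπ.aemeasurable hg.aestronglyMeasurable,
      ← integral_trim hle hg.stronglyMeasurable]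
    exact weil_comp_mk μ N hN νN μQ hWeil g hg hgc
  have step := haar_open_eq (Measure.map (QuotientGroup.mk : G → G ⧸ N) μ) (μQ.trim hle) hint hU
  rwa [Measure.map_apply hπ hU.measurableSet, trim_measurableSet_eq hle hU.measurableSet] at step

theorem lintegral_quot (μ : Measure G) [μ.IsHaarMeasure]
    (N : Subgroup G) [N.Normal] (hN : IsCompact (N : Set G))
    (νN : Measure N) [IsProbabilityMeasure νN]
    (μQ : Measure (G ⧸ N)) [μQ.IsHaarMeasure]
    (hWeil : WeilFormula N μ νN μQ)
    (h : G ⧸ N → ℝ) (hc : Continuous h) (h0 : ∀ q, 0 ≤ h q) :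
    ∫⁻ q, ENNReal.ofReal (h q) ∂μQ = ∫⁻ x, ENNReal.ofReal (h (QuotientGroup.mk x)) ∂μ := by
  rw [lintegral_eq_lintegral_meas_lt μQ (Eventually.of_forall h0) hc.measurable.aemeasurable,
    lintegral_eq_lintegral_meas_lt μ (Eventually.of_forall fun x => h0 _)
      ((hc.comp QuotientGroup.continuous_mk).measurable.aemeasurable)]
  refine lintegral_congr fun t => ?_
  have : {a : G | t < h (QuotientGroup.mk a)}
      = (QuotientGroup.mk : G → G ⧸ N) ⁻¹' {q | t < h q} := rfl
  rw [this, quot_open_eq μ N hN νN μQ hWeil (isOpen_lt continuous_const hc)]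

theorem essSup_cont_eq_iSup {X : Type*} [TopologicalSpace X] [MeasurableSpace X]
    (m : Measure X) [m.IsOpenPosMeasure] (f : X → ℝ) (hf : Continuous f) :
    essSup (fun x => (‖f x‖₊ : ℝ≥0∞)) m = ⨆ x, (‖f x‖₊ : ℝ≥0∞) := by
  refine le_antisymm (essSup_le_of_ae_le _ (Eventually.of_forall fun x =>
    le_iSup (fun x => (‖f x‖₊ : ℝ≥0∞)) x)) (iSup_le fun x₀ => ?_)
  by_contra hlt
  push_neg at hlt
  set c := essSup (fun x => (‖f x‖₊ : ℝ≥0∞)) m with hc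
  have hcne : c ≠ ⊤ := hlt.ne_top
  have hr : c.toReal < |f x₀| := by
    have := (ENNReal.toReal_lt_toReal hcne ENNReal.coe_ne_top).2 hlt
    simpa [Real.norm_eq_abs] using this
  set U := {x | c.toReal < |f x|} with hU
  have hUopen : IsOpen U := isOpen_lt continuous_const hf.abs
  have hnull : m U = 0 := by
    have hae := ae_le_essSup (μ := m) (fun x => (‖f x‖₊ : ℝ≥0∞))
    rw [Filter.eventually_iff, mem_ae_iff] at hae
    refine measure_mono_null (fun x hx => ?_) hae
    simp only [Set.mem_compl_iff, Set.mem_setOf_eq, not_le, ← hc]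
    have hx' : c.toReal < |f x| := hx
    have := (ENNReal.lt_ofReal_iff_toReal_lt hcne).2 hx'
    rwa [← Real.enorm_eq_ofReal_abs] at this
  exact absurd hnull (hUopen.measure_ne_zero m ⟨x₀, hr⟩)

theorem eLpNorm_quot (μ : Measure G) [μ.IsHaarMeasure]
    (N : Subgroup G) [N.Normal] (hN : IsCompact (N : Set G))
    (νN : Measure N) [IsProbabilityMeasure νN]
    (μQ : Measure (G ⧸ N)) [μQ.IsHaarMeasure]
    (hWeil : WeilFormula N μ νN μQ)
    (f : G ⧸ N → ℝ) (hf : Continuous f) (p : ℝ≥0∞) :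
    eLpNorm (fun x => f (QuotientGroup.mk x)) p μ = eLpNorm f p μQ := by
  rcases eq_or_ne p 0 with rfl | hp0
  · rw [eLpNorm_exponent_zero, eLpNorm_exponent_zero]
  rcases eq_or_ne p ∞ with rfl | hptop
  · rw [eLpNorm_exponent_top, eLpNorm_exponent_top]
    show essSup (fun x => (‖f (QuotientGroup.mk x)‖₊ : ℝ≥0∞)) μ
        = essSup (fun q => (‖f q‖₊ : ℝ≥0∞)) μQ
    rw [essSup_cont_eq_iSup μ (fun x => f (QuotientGroup.mk x)) (hf.comp QuotientGroup.continuous_mk),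
      essSup_cont_eq_iSup μQ f hf]
    exact QuotientGroup.mk_surjective.iSup_comp fun q => ((‖f q‖₊ : ℝ≥0∞))
  · rw [eLpNorm_eq_lintegral_rpow_enorm_toReal hp0 hptop, eLpNorm_eq_lintegral_rpow_enorm_toReal hp0 hptop]
    congr 1
    have hr : 0 ≤ p.toReal := ENNReal.toReal_nonneg
    have habs : ∀ y : ℝ, ‖y‖ₑ ^ p.toReal = ENNReal.ofReal (|y| ^ p.toReal) := by
      intro y
      rw [Real.enorm_eq_ofReal_abs, ← ENNReal.ofReal_rpow_of_nonneg (abs_nonneg y) hr]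
    simp only [habs]
    exact (lintegral_quot μ N hN νN μQ hWeil (fun q => |f q| ^ p.toReal)
      (hf.abs.rpow_const fun q => Or.inr hr)
      (fun q => Real.rpow_nonneg (abs_nonneg _) _)).symm

end Aux2

/-- **Factoring out a compact normal subgroup.**
Let `(G, σ, p)` be a Brascamp–Lieb datum of locally compact Hausdorff groups and `N` a compact
normal subgroup of `G` each of whose images `σ j '' N` is a compact normal subgroup of `Gj j`,
and let `σ̇ j : G ⧸ N → Gj j ⧸ σ j '' N` be the induced homomorphisms. Then the joint map of
the `σ̇ j` is proper whenever the joint map of the `σ j` is proper.  Moreover, if the Haar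
measures on `N` and the `σ j '' N` are probability measures and all quotient Haar measures are
normalised by the Weil quotient integral formula, then `BL(G ⧸ N, σ̇, p) ≤ BL(G, σ, p)`, with
equality when `N ⊆ ker (σ j)` for every `j`. -/
theorem BLConst_compact_quotient
    {J : Type*} [Fintype J]
    {G : Type*} [Group G] [TopologicalSpace G] [IsTopologicalGroup G] [LocallyCompactSpace G]
    [T2Space G] [MeasurableSpace G] [BorelSpace G]
    (μ : Measure G) [μ.IsHaarMeasure]
    {Gj : J → Type*} [∀ j, Group (Gj j)] [∀ j, TopologicalSpace (Gj j)]
    [∀ j, IsTopologicalGroup (Gj j)] [∀ j, LocallyCompactSpace (Gj j)] [∀ j, T2Space (Gj j)]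
    [∀ j, MeasurableSpace (Gj j)] [∀ j, BorelSpace (Gj j)]
    (ν : ∀ j, Measure (Gj j)) [∀ j, (ν j).IsHaarMeasure]
    (σ : ∀ j, G →* Gj j) (hσ : ∀ j, Continuous (σ j))
    (p : J → ℝ≥0∞) (hp : ∀ j, 1 ≤ p j)
    (N : Subgroup G) [N.Normal] (hNcompact : IsCompact (N : Set G))
    [∀ j, (N.map (σ j)).Normal] (hNjcompact : ∀ j, IsCompact ((N.map (σ j)) : Set (Gj j)))
    (νN : Measure N) [νN.IsHaarMeasure] [IsProbabilityMeasure νN]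
    (μQ : Measure (G ⧸ N)) [μQ.IsHaarMeasure]
    (hWeil : WeilFormula N μ νN μQ)
    (νNj : ∀ j, Measure (N.map (σ j))) [∀ j, (νNj j).IsHaarMeasure]
    [∀ j, IsProbabilityMeasure (νNj j)]
    (νQj : ∀ j, Measure (Gj j ⧸ N.map (σ j))) [∀ j, (νQj j).IsHaarMeasure]
    (hWeilj : ∀ j, WeilFormula (N.map (σ j)) (ν j) (νNj j) (νQj j)) :
    ((∀ K : Set (∀ j, Gj j), IsCompact K → IsCompact (Pi.monoidHom σ ⁻¹' K)) →
      (∀ K : Set (∀ j, Gj j ⧸ N.map (σ j)), IsCompact K →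
        IsCompact ((Pi.monoidHom fun j =>
          QuotientGroup.map N (N.map (σ j)) (σ j) (Subgroup.le_comap_map (f := σ j) N)) ⁻¹' K))) ∧
    BLConst μQ νQj
        (fun j => ⇑(QuotientGroup.map N (N.map (σ j)) (σ j)
          (Subgroup.le_comap_map (f := σ j) N))) p ≤
      BLConst μ ν (fun j => ⇑(σ j)) p ∧
    ((∀ j, N ≤ (σ j).ker) →
      BLConst μQ νQj
          (fun j => ⇑(QuotientGroup.map N (N.map (σ j)) (σ j)
            (Subgroup.le_comap_map (f := σ j) N))) p =
        BLConst μ ν (fun j => ⇑(σ j)) p) := by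
  classical
  haveI : IsClosed (N : Set G) := hNcompact.isClosed
  haveI hclj : ∀ j, IsClosed ((N.map (σ j)) : Set (Gj j)) := fun j => (hNjcompact j).isClosed
  have hσQcont : ∀ j, Continuous
      (QuotientGroup.map N (N.map (σ j)) (σ j) (Subgroup.le_comap_map (f := σ j) N)) := by
    intro j
    rw [(QuotientGroup.isQuotientMap_mk N).continuous_iff]
    have : (⇑(QuotientGroup.map N (N.map (σ j)) (σ j) (Subgroup.le_comap_map (f := σ j) N))
        ∘ (QuotientGroup.mk : G → G ⧸ N))
        = fun x => (QuotientGroup.mk (σ j x) : Gj j ⧸ N.map (σ j)) := by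
      funext x
      exact QuotientGroup.map_mk (N := N) (N.map (σ j)) (σ j) (Subgroup.le_comap_map (f := σ j) N) x
    rw [this]
    exact QuotientGroup.continuous_mk.comp (hσ j)
  -- Part 1 : properness
  have part1 : (∀ K : Set (∀ j, Gj j), IsCompact K → IsCompact (Pi.monoidHom σ ⁻¹' K)) →
      (∀ K : Set (∀ j, Gj j ⧸ N.map (σ j)), IsCompact K →
        IsCompact ((Pi.monoidHom fun j =>
          QuotientGroup.map N (N.map (σ j)) (σ j) (Subgroup.le_comap_map (f := σ j) N)) ⁻¹' K)) := by
    intro hproper K hK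
    set P : (∀ j, Gj j) → (∀ j, Gj j ⧸ N.map (σ j)) :=
      fun z j => QuotientGroup.mk (z j) with hP
    have hPc : Continuous P :=
      continuous_pi fun j => QuotientGroup.continuous_mk.comp (continuous_apply j)
    have hPK : IsCompact (P ⁻¹' K) := by
      refine IsCompact.of_isClosed_subset
        (isCompact_univ_pi fun j => quot_isCompact_preimage _ (hNjcompact j)
          (hK.image (continuous_apply j)))
        (hK.isClosed.preimage hPc) ?_
      intro z hz
      intro j _
      exact ⟨P z, hz, rfl⟩
    have h2 := hproper _ hPK
    have hkey : ∀ x : G, (Pi.monoidHom fun j =>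
        QuotientGroup.map N (N.map (σ j)) (σ j) (Subgroup.le_comap_map (f := σ j) N))
          (QuotientGroup.mk x) = P (Pi.monoidHom σ x) := by
      intro x
      funext j
      show QuotientGroup.map N (N.map (σ j)) (σ j) (Subgroup.le_comap_map (f := σ j) N)
        (QuotientGroup.mk x) = QuotientGroup.mk (σ j x)
      exact QuotientGroup.map_mk (N := N) (N.map (σ j)) (σ j) (Subgroup.le_comap_map (f := σ j) N) x
    have heq : (Pi.monoidHom fun j =>
        QuotientGroup.map N (N.map (σ j)) (σ j) (Subgroup.le_comap_map (f := σ j) N)) ⁻¹' K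
        = QuotientGroup.mk '' (Pi.monoidHom σ ⁻¹' (P ⁻¹' K)) := by
      ext q
      constructor
      · intro hq
        obtain ⟨x, rfl⟩ := QuotientGroup.mk_surjective q
        refine ⟨x, ?_, rfl⟩
        simpa [Set.mem_preimage, hkey x] using hq
      · rintro ⟨x, hx, rfl⟩
        simpa [Set.mem_preimage, hkey x] using hx
    rw [heq]
    exact h2.image QuotientGroup.continuous_mk
  -- Part 2 : inequality
  have hle2 : BLConst μQ νQj
      (fun j => ⇑(QuotientGroup.map N (N.map (σ j)) (σ j)
        (Subgroup.le_comap_map (f := σ j) N))) p ≤ BLConst μ ν (fun j => ⇑(σ j)) p := by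
    apply sInf_le_sInf
    rintro C hC f hfc hfs hf0
    have hFsupp : ∀ j, HasCompactSupport fun z : Gj j => f j (QuotientGroup.mk z) := fun j =>
      hasCompactSupport_comp_mk _ (hNjcompact j) (hfs j)
    have key := hC (fun j z => f j (QuotientGroup.mk z))
      (fun j => (hfc j).comp QuotientGroup.continuous_mk) hFsupp (fun j z => hf0 j _)
    have hprod : Continuous fun q : G ⧸ N => ∏ j, f j
        (QuotientGroup.map N (N.map (σ j)) (σ j) (Subgroup.le_comap_map (f := σ j) N) q) :=
      continuous_finset_prod _ fun j _ => (hfc j).comp (hσQcont j)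
    have hnn : ∀ q : G ⧸ N, 0 ≤ ∏ j, f j
        (QuotientGroup.map N (N.map (σ j)) (σ j) (Subgroup.le_comap_map (f := σ j) N) q) :=
      fun q => Finset.prod_nonneg fun j _ => hf0 j _
    have hQ := lintegral_quot μ N hNcompact νN μQ hWeil _ hprod hnn
    calc ∫⁻ q, ∏ j, ENNReal.ofReal (f j
          (QuotientGroup.map N (N.map (σ j)) (σ j) (Subgroup.le_comap_map (f := σ j) N) q)) ∂μQ
        = ∫⁻ q, ENNReal.ofReal (∏ j, f j
          (QuotientGroup.map N (N.map (σ j)) (σ j) (Subgroup.le_comap_map (f := σ j) N) q)) ∂μQ := by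
          simp_rw [ENNReal.ofReal_prod_of_nonneg (fun j _ => hf0 j _)]
      _ = ∫⁻ x, ENNReal.ofReal (∏ j, f j
          (QuotientGroup.map N (N.map (σ j)) (σ j) (Subgroup.le_comap_map (f := σ j) N)
            (QuotientGroup.mk x))) ∂μ := hQ
      _ = ∫⁻ x, ∏ j, ENNReal.ofReal (f j (QuotientGroup.mk (σ j x))) ∂μ := by
          simp_rw [ENNReal.ofReal_prod_of_nonneg (fun j _ => hf0 j _), QuotientGroup.map_mk]
      _ ≤ C * ∏ j, eLpNorm (fun z => f j (QuotientGroup.mk z)) (p j) (ν j) := key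
      _ = C * ∏ j, eLpNorm (f j) (p j) (νQj j) := by
          congr 1
          exact Finset.prod_congr rfl fun j _ => eLpNorm_quot (ν j) (N.map (σ j)) (hNjcompact j)
            (νNj j) (νQj j) (hWeilj j) (f j) (hfc j) (p j)
  -- Part 3 : equality when N is in every kernel
  have hge : (∀ j, N ≤ (σ j).ker) → BLConst μ ν (fun j => ⇑(σ j)) p ≤
      BLConst μQ νQj (fun j => ⇑(QuotientGroup.map N (N.map (σ j)) (σ j)
        (Subgroup.le_comap_map (f := σ j) N))) p := by
    intro hker
    apply sInf_le_sInf
    rintro C hC f hfc hfs hf0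
    have htriv : ∀ j, ∀ y : (N.map (σ j)), (y : Gj j) = 1 := by
      rintro j ⟨y, hy⟩
      obtain ⟨n, hn, rfl⟩ := hy
      exact MonoidHom.mem_ker.mp (hker j hn)
    set g : ∀ j, (Gj j ⧸ N.map (σ j)) → ℝ := fun j q => f j (Quotient.out q) with hg
    have hgmk : ∀ j (z : Gj j), g j (QuotientGroup.mk z) = f j z := by
      intro j z
      obtain ⟨n, hn⟩ := QuotientGroup.mk_out_eq_mul (N.map (σ j)) z
      rw [hg]
      simp only
      rw [hn, htriv j n, mul_one]
    have hgc : ∀ j, Continuous (g j) := by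
      intro j
      rw [(QuotientGroup.isQuotientMap_mk (N.map (σ j))).continuous_iff]
      have : (g j ∘ (QuotientGroup.mk : Gj j → Gj j ⧸ N.map (σ j))) = f j := funext (hgmk j)
      rw [this]
      exact hfc j
    have hgsupp : ∀ j, HasCompactSupport (g j) := by
      intro j
      have himg : IsCompact ((QuotientGroup.mk : Gj j → Gj j ⧸ N.map (σ j)) '' tsupport (f j)) :=
        (hfs j).image QuotientGroup.continuous_mk
      apply IsCompact.of_isClosed_subset himg (isClosed_tsupport _)
      refine closure_minimal ?_ himg.isClosed
      intro q hq
      exact ⟨q.out, subset_tsupport _ hq, q.out_eq'⟩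
    have key := hC g hgc hgsupp (fun j q => hf0 j _)
    have hprod : Continuous fun q : G ⧸ N => ∏ j, g j
        (QuotientGroup.map N (N.map (σ j)) (σ j) (Subgroup.le_comap_map (f := σ j) N) q) :=
      continuous_finset_prod _ fun j _ => (hgc j).comp (hσQcont j)
    have hnn : ∀ q : G ⧸ N, 0 ≤ ∏ j, g j
        (QuotientGroup.map N (N.map (σ j)) (σ j) (Subgroup.le_comap_map (f := σ j) N) q) :=
      fun q => Finset.prod_nonneg fun j _ => hf0 j _
    have hQ := lintegral_quot μ N hNcompact νN μQ hWeil _ hprod hnn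
    calc ∫⁻ x, ∏ j, ENNReal.ofReal (f j (σ j x)) ∂μ
        = ∫⁻ x, ENNReal.ofReal (∏ j, g j
          (QuotientGroup.map N (N.map (σ j)) (σ j) (Subgroup.le_comap_map (f := σ j) N)
            (QuotientGroup.mk x))) ∂μ := by
          simp_rw [QuotientGroup.map_mk, hgmk, ENNReal.ofReal_prod_of_nonneg (fun j _ => hf0 j _)]
      _ = ∫⁻ q, ENNReal.ofReal (∏ j, g j
          (QuotientGroup.map N (N.map (σ j)) (σ j) (Subgroup.le_comap_map (f := σ j) N) q)) ∂μQ :=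
          hQ.symm
      _ = ∫⁻ q, ∏ j, ENNReal.ofReal (g j
          (QuotientGroup.map N (N.map (σ j)) (σ j) (Subgroup.le_comap_map (f := σ j) N) q)) ∂μQ := by
          exact lintegral_congr fun q => ENNReal.ofReal_prod_of_nonneg (fun j _ => hf0 j _)
      _ ≤ C * ∏ j, eLpNorm (g j) (p j) (νQj j) := key
      _ = C * ∏ j, eLpNorm (f j) (p j) (ν j) := by
          congr 1
          refine Finset.prod_congr rfl fun j _ => ?_
          rw [← eLpNorm_quot (ν j) (N.map (σ j)) (hNjcompact j) (νNj j) (νQj j) (hWeilj j)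
            (g j) (hgc j) (p j)]
          congr 1
          funext z
          exact hgmk j z
  exact ⟨part1, hle2, fun hker => le_antisymm hle2 (hge hker)⟩




end
end

section
/- Let n ≥ 1 and let N be a (not necessarily closed) normal subgroup of the Heisenberg group ℍⁿ. Then either N is contained in the centre {0} × ℝ, or N contains the centre {0} × ℝ. -/
open scoped ComplexConjugate

/-- The Heisenberg group `ℍⁿ`: the set `ℂⁿ × ℝ` with the group law
`(z, t) ⋄ (z', t') = (z + z', t + t' + Im (z̄ ⬝ z') / 2)`. -/
def Heisenberg (n : ℕ) : Type := (Fin n → ℂ) × ℝ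

namespace Heisenberg

variable {n : ℕ}

noncomputable instance : Group (Heisenberg n) where
  mul a b := (a.1 + b.1, a.2 + b.2 + (∑ i, conj (a.1 i) * b.1 i).im / 2)
  one := ((0 : Fin n → ℂ), (0 : ℝ))
  inv a := (-a.1, -a.2)
  mul_assoc a b c := by
    refine Prod.ext (add_assoc _ _ _) ?_
    show a.2 + b.2 + (∑ i, conj (a.1 i) * b.1 i).im / 2 + c.2 +
        (∑ i, conj ((a.1 + b.1) i) * c.1 i).im / 2 =
      a.2 + (b.2 + c.2 + (∑ i, conj (b.1 i) * c.1 i).im / 2) +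
        (∑ i, conj (a.1 i) * ((b.1 + c.1) i)).im / 2
    simp only [Pi.add_apply, map_add, add_mul, mul_add, Finset.sum_add_distrib,
      Complex.add_im]
    ring
  one_mul a := by
    refine Prod.ext (zero_add _) ?_
    show (0 : ℝ) + a.2 + (∑ i, conj ((0 : Fin n → ℂ) i) * a.1 i).im / 2 = a.2
    simp
  mul_one a := by
    refine Prod.ext (add_zero _) ?_
    show a.2 + 0 + (∑ i, conj (a.1 i) * (0 : Fin n → ℂ) i).im / 2 = a.2
    simp
  inv_mul_cancel a := by
    refine Prod.ext (neg_add_cancel _) ?_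
    show -a.2 + a.2 + (∑ i, conj ((-a.1) i) * a.1 i).im / 2 = 0
    have h : (∑ i, conj ((-a.1) i) * a.1 i).im = 0 := by
      rw [Complex.im_sum]
      refine Finset.sum_eq_zero fun i _ => ?_
      simp only [Pi.neg_apply, map_neg, neg_mul, Complex.neg_im, Complex.mul_im,
        Complex.conj_re, Complex.conj_im]
      ring
    rw [h]
    simp

noncomputable instance : TopologicalSpace (Heisenberg n) :=
  inferInstanceAs (TopologicalSpace ((Fin n → ℂ) × ℝ))

instance : MeasurableSpace (Heisenberg n) :=
  inferInstanceAs (MeasurableSpace ((Fin n → ℂ) × ℝ))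

noncomputable instance : MeasureTheory.MeasureSpace (Heisenberg n) :=
  inferInstanceAs (MeasureTheory.MeasureSpace ((Fin n → ℂ) × ℝ))

end Heisenberg

/-- **Normal subgroups of the Heisenberg group and its centre.**
Every normal subgroup of the Heisenberg group `ℍⁿ` is either contained in the centre
`{0} × ℝ` or contains the centre `{0} × ℝ`. -/
theorem Heisenberg.normal_subgroup_subset_center_or_center_subset
    (n : ℕ) (hn : 1 ≤ n) (N : Subgroup (Heisenberg n)) (hN : N.Normal) :
    (N : Set (Heisenberg n)) ⊆ {x : Heisenberg n | x.1 = 0} ∨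
      {x : Heisenberg n | x.1 = 0} ⊆ (N : Set (Heisenberg n)) := by
  have mul_def : ∀ a b : Heisenberg n,
      a * b = (a.1 + b.1, a.2 + b.2 + (∑ i, conj (a.1 i) * b.1 i).im / 2) := fun _ _ => rfl
  have inv_def : ∀ a : Heisenberg n, a⁻¹ = (-a.1, -a.2) := fun _ => rfl
  by_cases hc : ∀ x ∈ N, (x : Heisenberg n).1 = 0
  · exact Or.inl fun x hx => hc x hx
  · right
    push_neg at hc
    obtain ⟨g, hg, hz⟩ := hc
    obtain ⟨j, hj⟩ : ∃ j, g.1 j ≠ 0 := by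
      by_contra h; push_neg at h; exact hz (funext h)
    intro x hx
    have hx1 : x.1 = 0 := hx
    set w : Fin n → ℂ := fun i => if i = j then (-x.2 : ℂ) * Complex.I / conj (g.1 j) else 0
      with hw
    have hj' : conj (g.1 j) ≠ 0 := by simpa using hj
    have hA : (∑ i, conj (w i) * g.1 i) = (x.2 : ℂ) * Complex.I := by
      rw [Finset.sum_eq_single j]
      · simp only [hw, if_pos rfl, map_div₀, map_mul, map_neg, Complex.conj_I,
          Complex.conj_conj, Complex.conj_ofReal]
        rw [div_mul_cancel₀ _ hj]
        ring
      · intro i _ hij; simp [hw, hij]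
      · intro h; simp at h
    have h2 : (∑ i, conj (g.1 i) * w i) = (-x.2 : ℂ) * Complex.I := by
      rw [Finset.sum_eq_single j]
      · simp only [hw, if_pos rfl]
        field_simp
      · intro i _ hij; simp [hw, hij]
      · intro h; simp at h
    have hB : (∑ i, conj ((w + g.1) i) * (-w) i).im = x.2 := by
      have hterm : ∀ i, conj ((w + g.1) i) * (-w) i
          = -(conj (w i) * w i) - conj (g.1 i) * w i := by
        intro i; simp only [Pi.add_apply, Pi.neg_apply, map_add]; ring
      have h1 : (∑ i, conj (w i) * w i).im = 0 := by
        rw [Complex.im_sum]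
        refine Finset.sum_eq_zero fun i _ => ?_
        simp only [Complex.mul_im, Complex.conj_re, Complex.conj_im]
        ring
      rw [Finset.sum_congr rfl fun i _ => hterm i, Finset.sum_sub_distrib, h2,
        Finset.sum_neg_distrib]
      simp only [Complex.sub_im, Complex.neg_im, h1, Complex.mul_im, Complex.I_re,
        Complex.I_im, Complex.ofReal_re, Complex.ofReal_im, Complex.neg_re]
      ring
    have hC : (∑ i, conj (g.1 i) * (-g.1) i).im = 0 := by
      rw [Complex.im_sum]
      refine Finset.sum_eq_zero fun i _ => ?_
      simp only [Pi.neg_apply, Complex.mul_im, Complex.neg_im, Complex.neg_re,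
        Complex.conj_re, Complex.conj_im]
      ring
    have key : ∀ u : Heisenberg n, u = ((w, 0) : (Fin n → ℂ) × ℝ) →
        u * g * u⁻¹ * g⁻¹ = x := by
      intro u hu
      subst hu
      refine Prod.ext ?_ ?_
      · show w + g.1 + -w + -g.1 = x.1
        rw [hx1]; abel
      · show (0 : ℝ) + g.2 + (∑ i, conj (w i) * g.1 i).im / 2 + -(0 : ℝ)
            + (∑ i, conj ((w + g.1) i) * (-w) i).im / 2 + -g.2
            + (∑ i, conj ((w + g.1 + -w) i) * (-g.1) i).im / 2 = x.2
        have hwg : w + g.1 + -w = g.1 := by abel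
        rw [hwg, hA, hB, hC]
        simp only [Complex.mul_im, Complex.I_re, Complex.I_im, Complex.ofReal_re,
          Complex.ofReal_im]
        ring
    have hmem := mul_mem (hN.conj_mem g hg ((w, 0) : (Fin n → ℂ) × ℝ)) (inv_mem hg)
    rwa [key _ rfl] at hmem
end

section
/- Let (G, σ, p) be a canonical Brascamp–Lieb datum in which G and all G_j are compact Lie groups. Let G_e and (G_j)_e be the identity components of G and G_j, and let φ_j : G_e → (G_j)_e be the restriction of σ_j with codomain (G_j)_e (well defined since continuous homomorphisms map the identity component into the identity component). Then BL(G, σ, p) < ∞ if and only if BL(G_e, φ, p) < ∞, for any choice of Haar measures on the groups involved. -/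
open MeasureTheory ENNReal
open Manifold

noncomputable section

open Classical in
noncomputable def clopenExtend {X : Type*} (s : Set X) (f : s → ℝ) : X → ℝ :=
  fun x => if h : x ∈ s then f ⟨x, h⟩ else 0

lemma clopenExtend_coe {X : Type*} (s : Set X) (f : s → ℝ) (y : s) :
    clopenExtend s f ↑y = f y := by
  simp only [clopenExtend, dif_pos y.2]

lemma clopenExtend_support {X : Type*} (s : Set X) (f : s → ℝ) :
    Function.support (clopenExtend s f) ⊆ s := by
  intro x hx
  by_contra h
  exact hx (by simp only [clopenExtend, dif_neg h])

lemma clopenExtend_nonneg {X : Type*} (s : Set X) (f : s → ℝ) (hf : ∀ y, 0 ≤ f y) (x : X) :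
    0 ≤ clopenExtend s f x := by
  unfold clopenExtend
  split <;> simp [hf]

lemma continuous_clopenExtend {X : Type*} [TopologicalSpace X] {s : Set X}
    (hso : IsOpen s) (hsc : IsClosed s) (f : s → ℝ) (hf : Continuous f) :
    Continuous (clopenExtend s f) := by
  rw [continuous_iff_continuousAt]
  intro x
  by_cases hx : x ∈ s
  · have h1 : ContinuousAt (clopenExtend s f ∘ (Subtype.val : s → X)) ⟨x, hx⟩ := by
      have he : clopenExtend s f ∘ (Subtype.val : s → X) = f := by
        funext y; exact clopenExtend_coe s f y
      rw [he]; exact hf.continuousAt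
    exact (hso.isOpenEmbedding_subtypeVal.continuousAt_iff).mp h1
  · have hmem : sᶜ ∈ nhds x := hsc.isOpen_compl.mem_nhds hx
    have heq : clopenExtend s f =ᶠ[nhds x] fun _ => (0:ℝ) := by
      filter_upwards [hmem] with y hy
      simp only [clopenExtend, dif_neg hy]
    exact (continuousAt_const (y := (0:ℝ))).congr heq.symm

lemma isHaarMeasure_comap {G : Type*} [Group G] [TopologicalSpace G] [IsTopologicalGroup G]
    [MeasurableSpace G] [BorelSpace G] (μ : Measure G) [μ.IsHaarMeasure]
    (H : Subgroup G) (hO : IsOpen (H : Set G)) (hC : IsClosed (H : Set G)) :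
    (μ.comap (Subtype.val : H → G)).IsHaarMeasure := by
  haveI : BorelSpace ↥H := Subtype.borelSpace (H : Set G)
  have hemb : MeasurableEmbedding (Subtype.val : H → G) :=
    MeasurableEmbedding.subtype_coe hC.measurableSet
  have capp : ∀ s : Set H, μ.comap Subtype.val s = μ (Subtype.val '' s) :=
    fun s => hemb.comap_apply μ s
  have i1 : IsFiniteMeasureOnCompacts (μ.comap (Subtype.val : H → G)) := by
    constructor
    intro K hK
    rw [capp]
    exact (hK.image continuous_subtype_val).measure_lt_top
  have i2 : (μ.comap (Subtype.val : H → G)).IsMulLeftInvariant := by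
    constructor
    intro g
    ext s hs
    rw [Measure.map_apply (measurable_const_mul g) hs, capp, capp]
    have himg : (Subtype.val '' ((g * ·) ⁻¹' s)) = ((g : G) * ·) ⁻¹' (Subtype.val '' s) := by
      ext x
      constructor
      · rintro ⟨y, hy, rfl⟩
        exact ⟨g * y, hy, rfl⟩
      · rintro ⟨z, hz, hzx⟩
        refine ⟨g⁻¹ * z, ?_, ?_⟩
        · show g * (g⁻¹ * z) ∈ s
          rwa [mul_inv_cancel_left]
        · push_cast
          rw [hzx]
          group
    rw [himg, measure_preimage_mul]
  have i3 : (μ.comap (Subtype.val : H → G)).IsOpenPosMeasure := by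
    constructor
    intro U hU hUne
    rw [capp]
    exact (hO.isOpenEmbedding_subtypeVal.isOpenMap U hU).measure_ne_zero μ (hUne.image _)
  exact { toIsFiniteMeasureOnCompacts := i1, toIsMulLeftInvariant := i2, toIsOpenPosMeasure := i3 }

/-- **Reduction to identity components for compact Lie groups.**
Let `(G, σ, p)` be a canonical Brascamp–Lieb datum of compact Lie groups, and for each `j` let
`φ j` be the restriction of `σ j` to the identity component `G_e` of `G`, with codomain the
identity component `(Gj j)_e` of `Gj j`. Then `BL(G, σ, p)` is finite if and only if
`BL(G_e, φ, p)` is finite, for any choice of Haar measures on the groups involved. -/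
theorem BLConst_lt_top_iff_identityComponent
    {J : Type*} [Fintype J]
    {Gj : J → Type*} [∀ j, Group (Gj j)] [∀ j, TopologicalSpace (Gj j)]
    [∀ j, IsTopologicalGroup (Gj j)] [∀ j, T2Space (Gj j)] [∀ j, CompactSpace (Gj j)]
    {E : J → Type*} [∀ j, NormedAddCommGroup (E j)] [∀ j, NormedSpace ℝ (E j)]
    [∀ j, FiniteDimensional ℝ (E j)]
    [∀ j, ChartedSpace (E j) (Gj j)] [∀ j, LieGroup 𝓘(ℝ, E j) (⊤ : ℕ∞) (Gj j)]
    [∀ j, MeasurableSpace (Gj j)] [∀ j, BorelSpace (Gj j)]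
    (ν : ∀ j, Measure (Gj j)) [∀ j, (ν j).IsHaarMeasure]
    (G : Subgroup (∀ j, Gj j)) (hGclosed : IsClosed (G : Set (∀ j, Gj j)))
    [CompactSpace G]
    {F : Type*} [NormedAddCommGroup F] [NormedSpace ℝ F] [FiniteDimensional ℝ F]
    [ChartedSpace F G] [LieGroup 𝓘(ℝ, F) (⊤ : ℕ∞) G]
    (μ : Measure G) [μ.IsHaarMeasure]
    (p : J → ℝ≥0∞) (hp : ∀ j, 1 ≤ p j)
    (μe : Measure (Subgroup.connectedComponentOfOne G)) [μe.IsHaarMeasure]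
    (νe : ∀ j, Measure (Subgroup.connectedComponentOfOne (Gj j)))
    [∀ j, (νe j).IsHaarMeasure]
    (φ : ∀ j, (Subgroup.connectedComponentOfOne G) →
      (Subgroup.connectedComponentOfOne (Gj j)))
    (hφ : ∀ j x, ((φ j x : Gj j)) = ((x : G) : ∀ j, Gj j) j) :
    BLConst μ ν (fun j => fun x : G => (x : ∀ j, Gj j) j) p < ∞ ↔
      BLConst μe νe φ p < ∞ := by
  classical
  -- topology instances
  haveI hlcj : ∀ j, LocallyConnectedSpace (Gj j) := fun j =>
    ChartedSpace.locallyConnectedSpace (E j) (Gj j)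
  haveI hlcG : LocallyConnectedSpace G := ChartedSpace.locallyConnectedSpace F G
  haveI hscj : ∀ j, SecondCountableTopology (Gj j) := fun j =>
    ChartedSpace.secondCountable_of_sigmaCompact (E j) (Gj j)
  haveI hscG : SecondCountableTopology G := ChartedSpace.secondCountable_of_sigmaCompact F G
  haveI : BorelSpace G := Subtype.borelSpace (G : Set (∀ j, Gj j))
  -- identity components
  have hHGo : IsOpen ((Subgroup.connectedComponentOfOne G : Subgroup G) : Set G) :=
    isOpen_connectedComponent
  have hHGc : IsClosed ((Subgroup.connectedComponentOfOne G : Subgroup G) : Set G) :=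
    isClosed_connectedComponent
  have hKo : ∀ j, IsOpen ((Subgroup.connectedComponentOfOne (Gj j) : Subgroup (Gj j)) : Set (Gj j)) :=
    fun j => isOpen_connectedComponent
  have hKc : ∀ j, IsClosed ((Subgroup.connectedComponentOfOne (Gj j) : Subgroup (Gj j)) : Set (Gj j)) :=
    fun j => isClosed_connectedComponent
  haveI : CompactSpace (Subgroup.connectedComponentOfOne G) :=
    isCompact_iff_compactSpace.mp hHGc.isCompact
  haveI : ∀ j, CompactSpace (Subgroup.connectedComponentOfOne (Gj j)) := fun j =>
    isCompact_iff_compactSpace.mp (hKc j).isCompact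
  haveI : BorelSpace (Subgroup.connectedComponentOfOne G) :=
    Subtype.borelSpace ((Subgroup.connectedComponentOfOne G : Subgroup G) : Set G)
  haveI : ∀ j, BorelSpace (Subgroup.connectedComponentOfOne (Gj j)) := fun j =>
    Subtype.borelSpace ((Subgroup.connectedComponentOfOne (Gj j) : Subgroup (Gj j)) : Set (Gj j))
  -- comap Haar measures
  set μH : Measure (Subgroup.connectedComponentOfOne G) :=
    μ.comap Subtype.val with hμHdef
  haveI hμHh : μH.IsHaarMeasure := isHaarMeasure_comap μ _ hHGo hHGc
  set νH : ∀ j, Measure (Subgroup.connectedComponentOfOne (Gj j)) :=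
    fun j => (ν j).comap Subtype.val with hνHdef
  haveI hνHh : ∀ j, (νH j).IsHaarMeasure := fun j => isHaarMeasure_comap (ν j) _ (hKo j) (hKc j)
  haveI : SecondCountableTopology (Subgroup.connectedComponentOfOne G) :=
    (by infer_instance : SecondCountableTopology
      (((Subgroup.connectedComponentOfOne G : Subgroup G) : Set G)))
  haveI : ∀ j, SecondCountableTopology (Subgroup.connectedComponentOfOne (Gj j)) := fun j =>
    (by infer_instance : SecondCountableTopology
      (((Subgroup.connectedComponentOfOne (Gj j) : Subgroup (Gj j)) : Set (Gj j))))
  -- scalar factors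
  set cG : ℝ≥0∞ := (Measure.haarScalarFactor μe μH : ℝ≥0∞) with hcGdef
  have hcG0 : cG ≠ 0 :=
    ENNReal.coe_ne_zero.2 (Measure.haarScalarFactor_pos_of_isHaarMeasure μe μH).ne'
  have hcGt : cG ≠ ∞ := ENNReal.coe_ne_top
  have hμe : μe = cG • μH := by
    conv_lhs => rw [Measure.isMulLeftInvariant_eq_smul μe μH]
    ext s hs
    rw [Measure.smul_apply, Measure.smul_apply, ENNReal.smul_def]
  set cj : J → ℝ≥0∞ := fun j => (Measure.haarScalarFactor (νe j) (νH j) : ℝ≥0∞)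
    with hcjdef
  have hcj0 : ∀ j, cj j ≠ 0 := fun j =>
    ENNReal.coe_ne_zero.2 (Measure.haarScalarFactor_pos_of_isHaarMeasure (νe j) (νH j)).ne'
  have hcjt : ∀ j, cj j ≠ ∞ := fun j => ENNReal.coe_ne_top
  have hνe : ∀ j, νe j = cj j • νH j := by
    intro j
    conv_lhs => rw [Measure.isMulLeftInvariant_eq_smul (νe j) (νH j)]
    ext s hs
    rw [Measure.smul_apply, Measure.smul_apply, ENNReal.smul_def]
  set D : J → ℝ≥0∞ := fun j => cj j ^ (1 / p j).toReal with hDdef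
  have hD0 : ∀ j, D j ≠ 0 := fun j =>
    (ENNReal.rpow_pos (pos_iff_ne_zero.mpr (hcj0 j)) (hcjt j)).ne'
  have hDt : ∀ j, D j ≠ ∞ := fun j => ENNReal.rpow_ne_top_of_nonneg ENNReal.toReal_nonneg (hcjt j)
  -- integral transfer
  have hHGmeas : MeasurableSet ((Subgroup.connectedComponentOfOne G : Subgroup G) : Set G) :=
    hHGc.measurableSet
  have hKmeas : ∀ j,
      MeasurableSet ((Subgroup.connectedComponentOfOne (Gj j) : Subgroup (Gj j)) : Set (Gj j)) :=
    fun j => (hKc j).measurableSet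
  have hembH : MeasurableEmbedding
      (Subtype.val : (Subgroup.connectedComponentOfOne G) → G) :=
    MeasurableEmbedding.subtype_coe hHGmeas
  have keyH : ∀ fn : G → ℝ≥0∞,
      ∫⁻ y : (Subgroup.connectedComponentOfOne G), fn ↑y ∂μH =
        ∫⁻ x in ((Subgroup.connectedComponentOfOne G : Subgroup G) : Set G), fn x ∂μ := by
    intro fn
    have h1 := (MeasurableEmbedding.subtype_coe hHGmeas).lintegral_map
      (μ := Measure.comap Subtype.val μ) fn
    rw [map_comap_subtype_coe hHGmeas μ] at h1
    exact h1.symm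
  have keyN : ∀ j (fn : Gj j → ℝ), Continuous fn →
      eLpNorm (fun z : (Subgroup.connectedComponentOfOne (Gj j)) => fn ↑z) (p j) (νH j) =
        eLpNorm fn (p j)
          ((ν j).restrict ((Subgroup.connectedComponentOfOne (Gj j) : Subgroup (Gj j)) : Set (Gj j))) := by
    intro j fn hfn
    have h1 := eLpNorm_map_measure (p := p j)
      (f := (Subtype.val :
        (((Subgroup.connectedComponentOfOne (Gj j) : Subgroup (Gj j)) : Set (Gj j))) → Gj j))
      (μ := Measure.comap (Subtype.val :
        (((Subgroup.connectedComponentOfOne (Gj j) : Subgroup (Gj j)) : Set (Gj j))) → Gj j) (ν j))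
      hfn.aestronglyMeasurable measurable_subtype_coe.aemeasurable
    rw [map_comap_subtype_coe (hKmeas j) (ν j)] at h1
    exact h1.symm
  -- unfold
  simp only [BLConst]
  rw [sInf_lt_iff, sInf_lt_iff]
  simp only [Set.mem_setOf_eq]
  constructor
  · rintro ⟨C, hC, hClt⟩
    refine ⟨cG * C * ∏ j, (D j)⁻¹, ?_, ?_⟩
    · intro f hfc hfs hfnn
      set Fb : ∀ j, Gj j → ℝ := fun j =>
        clopenExtend ((Subgroup.connectedComponentOfOne (Gj j) : Subgroup (Gj j)) : Set (Gj j))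
          (f j) with hFbdef
      have hFc : ∀ j, Continuous (Fb j) := fun j =>
        continuous_clopenExtend (hKo j) (hKc j) _ (hfc j)
      have hFs : ∀ j, HasCompactSupport (Fb j) := fun j =>
        IsClosed.isCompact (isClosed_tsupport _)
      have hFnn : ∀ j y, 0 ≤ Fb j y := fun j => clopenExtend_nonneg _ _ (hfnn j)
      have hmain := hC Fb hFc hFs hFnn
      have hpt : ∀ y : (Subgroup.connectedComponentOfOne G),
          ∏ j, ENNReal.ofReal (f j (φ j y)) =
            (fun x : G => ∏ j, ENNReal.ofReal (Fb j ((x : ∀ k, Gj k) j))) ↑y := by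
        intro y
        refine (Finset.prod_congr rfl fun j _ => ?_)
        have h : Fb j (((y : G) : ∀ k, Gj k) j) = f j (φ j y) := by
          rw [← hφ j y]
          exact clopenExtend_coe _ _ (φ j y)
        rw [h]
      have hnorm : ∀ j, eLpNorm (Fb j) (p j) (ν j) = (D j)⁻¹ * eLpNorm (f j) (p j) (νe j) := by
        intro j
        have h1 : Fb j = Set.indicator
            ((Subgroup.connectedComponentOfOne (Gj j) : Subgroup (Gj j)) : Set (Gj j)) (Fb j) :=
          (Set.indicator_eq_self.2 (clopenExtend_support _ _)).symm
        have h2 : eLpNorm (Fb j) (p j) (ν j) = eLpNorm (Fb j) (p j)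
            ((ν j).restrict
              ((Subgroup.connectedComponentOfOne (Gj j) : Subgroup (Gj j)) : Set (Gj j))) := by
          conv_lhs => rw [h1]
          exact eLpNorm_indicator_eq_eLpNorm_restrict (hKmeas j)
        have h4 := keyN j (Fb j) (hFc j)
        have h3 : (fun z : (Subgroup.connectedComponentOfOne (Gj j)) => Fb j ↑z) = f j := by
          funext z; exact clopenExtend_coe _ _ z
        rw [h3] at h4
        have h5 : eLpNorm (f j) (p j) (νe j) = D j * eLpNorm (f j) (p j) (νH j) := by
          rw [hνe j, eLpNorm_smul_measure_of_ne_zero (hcj0 j), smul_eq_mul]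
        rw [h2, ← h4, h5, ← mul_assoc, ENNReal.inv_mul_cancel (hD0 j) (hDt j), one_mul]
      calc ∫⁻ x, ∏ j, ENNReal.ofReal (f j (φ j x)) ∂μe
          = cG * ∫⁻ y : (Subgroup.connectedComponentOfOne G),
              (fun x : G => ∏ j, ENNReal.ofReal (Fb j ((x : ∀ k, Gj k) j))) ↑y ∂μH := by
            rw [hμe, lintegral_smul_measure]
            congr 1
            exact lintegral_congr hpt
        _ = cG * ∫⁻ x in ((Subgroup.connectedComponentOfOne G : Subgroup G) : Set G),
              ∏ j, ENNReal.ofReal (Fb j ((x : ∀ k, Gj k) j)) ∂μ := by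
            rw [keyH (fun x : G => ∏ j, ENNReal.ofReal (Fb j ((x : ∀ k, Gj k) j)))]
        _ ≤ cG * ∫⁻ x, ∏ j, ENNReal.ofReal (Fb j ((x : ∀ k, Gj k) j)) ∂μ :=
            mul_le_mul_right (lintegral_mono' Measure.restrict_le_self le_rfl) _
        _ ≤ cG * (C * ∏ j, eLpNorm (Fb j) (p j) (ν j)) := mul_le_mul_right hmain _
        _ = cG * C * ∏ j, ((D j)⁻¹ * eLpNorm (f j) (p j) (νe j)) := by
            rw [Finset.prod_congr rfl fun j _ => hnorm j]
            ring
        _ = (cG * C * ∏ j, (D j)⁻¹) * ∏ j, eLpNorm (f j) (p j) (νe j) := by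
            rw [Finset.prod_mul_distrib]
            ring
    · refine ENNReal.mul_lt_top (ENNReal.mul_lt_top hcGt.lt_top hClt) ?_
      refine ENNReal.prod_lt_top fun j _ => ?_
      exact ENNReal.inv_lt_top.2 (pos_iff_ne_zero.mpr (hD0 j))
  · rintro ⟨C, hC, hClt⟩
    -- finite cover by cosets of the identity component
    have hcov : (Set.univ : Set G) ⊆
        ⋃ g : G, (fun x => g⁻¹ * x) ⁻¹' ((Subgroup.connectedComponentOfOne G : Subgroup G) : Set G) := by
      intro x _
      refine Set.mem_iUnion.2 ⟨x, ?_⟩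
      show x⁻¹ * x ∈ ((Subgroup.connectedComponentOfOne G : Subgroup G) : Set G)
      rw [inv_mul_cancel]
      exact (Subgroup.connectedComponentOfOne G).one_mem
    obtain ⟨t, ht⟩ := isCompact_univ.elim_finite_subcover
      (fun g : G => (fun x => g⁻¹ * x) ⁻¹' ((Subgroup.connectedComponentOfOne G : Subgroup G) : Set G))
      (fun g => hHGo.preimage (continuous_mul_left g⁻¹)) hcov
    refine ⟨(t.card : ℝ≥0∞) * cG⁻¹ * C * ∏ j, D j, ?_, ?_⟩
    · intro f hfc hfs hfnn
      set Big : G → ℝ≥0∞ := fun x => ∏ j, ENNReal.ofReal (f j ((x : ∀ k, Gj k) j)) with hBigdef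
      have hBigm : Measurable Big := by
        refine Finset.measurable_prod _ fun j _ => ?_
        exact ENNReal.measurable_ofReal.comp
          (((hfc j).comp ((continuous_apply j).comp continuous_subtype_val)).measurable)
      have hindm : ∀ g : G, Measurable
          (((fun x => g⁻¹ * x) ⁻¹' ((Subgroup.connectedComponentOfOne G : Subgroup G) : Set G)).indicator Big) :=
        fun g => hBigm.indicator ((hHGo.preimage (continuous_mul_left g⁻¹)).measurableSet)
      have hpw : ∀ x : G, Big x ≤ ∑ g ∈ t,
          ((fun y => g⁻¹ * y) ⁻¹' ((Subgroup.connectedComponentOfOne G : Subgroup G) : Set G)).indicator Big x := by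
        intro x
        obtain ⟨g, hgt, hgx⟩ := Set.mem_iUnion₂.1 (ht (Set.mem_univ x))
        calc Big x = ((fun y => g⁻¹ * y) ⁻¹'
            ((Subgroup.connectedComponentOfOne G : Subgroup G) : Set G)).indicator Big x :=
              (Set.indicator_of_mem hgx _).symm
          _ ≤ _ := Finset.single_le_sum (f := fun g => ((fun y => g⁻¹ * y) ⁻¹'
              ((Subgroup.connectedComponentOfOne G : Subgroup G) : Set G)).indicator Big x)
              (fun i _ => zero_le) hgt
      have hsplit : ∫⁻ x, Big x ∂μ ≤ ∑ g ∈ t, ∫⁻ x,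
          ((fun y => g⁻¹ * y) ⁻¹' ((Subgroup.connectedComponentOfOne G : Subgroup G) : Set G)).indicator Big x ∂μ := by
        refine le_trans (lintegral_mono hpw) ?_
        rw [lintegral_finset_sum _ (fun g _ => hindm g)]
      have hcoset : ∀ g : G, ∫⁻ x,
          ((fun y => g⁻¹ * y) ⁻¹' ((Subgroup.connectedComponentOfOne G : Subgroup G) : Set G)).indicator Big x ∂μ
            ≤ cG⁻¹ * (C * ∏ j, (D j * eLpNorm (f j) (p j) (ν j))) := by
        intro g
        have htrans := (measurePreserving_mul_left μ g).lintegral_comp (hindm g)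
        rw [← htrans]
        have hindeq : ∀ x : G,
            ((fun y => g⁻¹ * y) ⁻¹' ((Subgroup.connectedComponentOfOne G : Subgroup G) : Set G)).indicator Big (g * x)
              = ((Subgroup.connectedComponentOfOne G : Subgroup G) : Set G).indicator
                  (fun z => Big (g * z)) x := by
          intro x
          have hmemiff : g * x ∈ (fun y => g⁻¹ * y) ⁻¹'
              ((Subgroup.connectedComponentOfOne G : Subgroup G) : Set G) ↔
                x ∈ ((Subgroup.connectedComponentOfOne G : Subgroup G) : Set G) := by
            simp [Set.mem_preimage, inv_mul_cancel_left]
          by_cases hx : x ∈ ((Subgroup.connectedComponentOfOne G : Subgroup G) : Set G)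
          · rw [Set.indicator_of_mem (hmemiff.2 hx), Set.indicator_of_mem hx]
          · rw [Set.indicator_of_notMem (fun hh => hx (hmemiff.1 hh)), Set.indicator_of_notMem hx]
        have hhT : ∀ j, Continuous (fun z : (Subgroup.connectedComponentOfOne (Gj j)) =>
            f j (((g : ∀ k, Gj k)) j * ↑z)) := fun j =>
          (hfc j).comp (continuous_const.mul continuous_subtype_val)
        have hform : ∀ y : (Subgroup.connectedComponentOfOne G), Big (g * ↑y) =
            ∏ j, ENNReal.ofReal ((fun z : (Subgroup.connectedComponentOfOne (Gj j)) =>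
              f j (((g : ∀ k, Gj k)) j * ↑z)) (φ j y)) := by
          intro y
          refine Finset.prod_congr rfl fun j _ => ?_
          congr 1
          show f j (((g * ↑y : G) : ∀ k, Gj k) j) = f j ((g : ∀ k, Gj k) j * ↑(φ j y))
          rw [hφ j y]
          rfl
        have happ := hC (fun j => fun z : (Subgroup.connectedComponentOfOne (Gj j)) =>
            f j (((g : ∀ k, Gj k)) j * ↑z)) hhT
          (fun j => IsClosed.isCompact (isClosed_tsupport _))
          (fun j z => hfnn j _)
        have hnorm2 : ∀ j, eLpNorm (fun z : (Subgroup.connectedComponentOfOne (Gj j)) =>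
            f j (((g : ∀ k, Gj k)) j * ↑z)) (p j) (νe j) ≤ D j * eLpNorm (f j) (p j) (ν j) := by
          intro j
          rw [hνe j, eLpNorm_smul_measure_of_ne_zero (hcj0 j), smul_eq_mul]
          refine mul_le_mul_right ?_ _
          have e1 := keyN j (fun x => f j ((g : ∀ k, Gj k) j * x))
            ((hfc j).comp (continuous_const.mul continuous_id))
          rw [e1]
          refine le_trans (eLpNorm_mono_measure _ Measure.restrict_le_self) (le_of_eq ?_)
          exact eLpNorm_comp_measurePreserving (hfc j).aestronglyMeasurable
            (measurePreserving_mul_left (ν j) ((g : ∀ k, Gj k) j))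
        calc ∫⁻ x, ((fun y => g⁻¹ * y) ⁻¹'
              ((Subgroup.connectedComponentOfOne G : Subgroup G) : Set G)).indicator Big (g * x) ∂μ
            = ∫⁻ x, ((Subgroup.connectedComponentOfOne G : Subgroup G) : Set G).indicator
                (fun z => Big (g * z)) x ∂μ := lintegral_congr hindeq
          _ = ∫⁻ x in ((Subgroup.connectedComponentOfOne G : Subgroup G) : Set G),
                Big (g * x) ∂μ := by rw [lintegral_indicator hHGmeas]
          _ = ∫⁻ y : (Subgroup.connectedComponentOfOne G), Big (g * ↑y) ∂μH :=
              (keyH (fun z => Big (g * z))).symm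
          _ = cG⁻¹ * ∫⁻ y : (Subgroup.connectedComponentOfOne G), Big (g * ↑y) ∂μe := by
              rw [hμe, lintegral_smul_measure, smul_eq_mul, ← mul_assoc, ENNReal.inv_mul_cancel hcG0 hcGt,
                one_mul]
          _ = cG⁻¹ * ∫⁻ y, ∏ j, ENNReal.ofReal ((fun z : (Subgroup.connectedComponentOfOne (Gj j)) =>
                f j (((g : ∀ k, Gj k)) j * ↑z)) (φ j y)) ∂μe := by
              rw [lintegral_congr hform]
          _ ≤ cG⁻¹ * (C * ∏ j, eLpNorm (fun z : (Subgroup.connectedComponentOfOne (Gj j)) =>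
                f j (((g : ∀ k, Gj k)) j * ↑z)) (p j) (νe j)) := mul_le_mul_right happ _
          _ ≤ cG⁻¹ * (C * ∏ j, (D j * eLpNorm (f j) (p j) (ν j))) :=
              mul_le_mul_right (mul_le_mul_right (Finset.prod_le_prod' fun j _ => hnorm2 j) _) _
      calc ∫⁻ x, ∏ j, ENNReal.ofReal (f j ((x : ∀ k, Gj k) j)) ∂μ
          ≤ ∑ g ∈ t, ∫⁻ x, ((fun y => g⁻¹ * y) ⁻¹'
              ((Subgroup.connectedComponentOfOne G : Subgroup G) : Set G)).indicator Big x ∂μ := hsplit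
        _ ≤ ∑ _g ∈ t, cG⁻¹ * (C * ∏ j, (D j * eLpNorm (f j) (p j) (ν j))) :=
            Finset.sum_le_sum fun g _ => hcoset g
        _ = (t.card : ℝ≥0∞) * (cG⁻¹ * (C * ∏ j, (D j * eLpNorm (f j) (p j) (ν j)))) := by
            rw [Finset.sum_const, nsmul_eq_mul]
        _ = ((t.card : ℝ≥0∞) * cG⁻¹ * C * ∏ j, D j) * ∏ j, eLpNorm (f j) (p j) (ν j) := by
            rw [Finset.prod_mul_distrib]
            ring
    · refine ENNReal.mul_lt_top (ENNReal.mul_lt_top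
        (ENNReal.mul_lt_top (ENNReal.natCast_lt_top _) (ENNReal.inv_lt_top.2 (pos_iff_ne_zero.mpr hcG0))) hClt) ?_
      exact ENNReal.prod_lt_top fun j _ => (hDt j).lt_top


end
end
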